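/- arXiv:2012.12710 — 11 statements merged into one kernel-verified Lean document; each statement's English description precedes it below -/
import Mathlib

section
/- For a matroid M = (E, I) and an independent set A ∈ I, if B ⊆ E satisfies |B| = |A| and the exchange digraph D_M(A) (with edges (g, g') for g ∈ A, g' ∉ A such that A − g + g' ∈ I) contains a unique perfect matching on the vertex set A Δ B, then B is independent in M. -/
structure FinMatroid (E : Type*) [Fintype E] [DecidableEq E] where
  Indep : Finset E → Prop
  empty_indep : Indep ∅
  subset_indep : ∀ ⦃I J : Finset E⦄, Indep I → J ⊆ I → Indep J
  aug : ∀ ⦃I J : Finset E⦄, Indep I → Indep J → I.card < J.card →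
    ∃ g ∈ J \ I, Indep (insert g I)

noncomputable def FinMatroid.rank {E : Type*} [Fintype E] [DecidableEq E]
    (M : FinMatroid E) (S : Finset E) : ℕ :=
  sSup {t | ∃ I : Finset E, I ⊆ S ∧ M.Indep I ∧ I.card = t}

/-- Maximin share `μ(k, S)` for a ℕ-valued valuation `v`: the maximum over
`k`-partitions `(Y 0, …, Y (k-1))` of `S` of `min_j v (Y j)`. -/
noncomputable def mmsN {E : Type*} [Fintype E] [DecidableEq E]
    (v : Finset E → ℕ) (k : ℕ) (S : Finset E) : ℕ :=
  sSup {t | ∃ Y : Fin k → Finset E,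
    (∀ a b, a ≠ b → Disjoint (Y a) (Y b)) ∧ Finset.univ.biUnion Y = S ∧
    ∀ j, t ≤ v (Y j)}

lemma FinMatroid.card_le_of_span {E : Type*} [Fintype E] [DecidableEq E]
    (M : FinMatroid E) {I' C' J : Finset E} (hI' : M.Indep I')
    (hspan : ∀ x ∈ C', x ∈ I' ∨ ¬ M.Indep (insert x I'))
    (hJ : M.Indep J) (hJs : J ⊆ C' ∪ I') : J.card ≤ I'.card := by
  by_contra hlt
  push_neg at hlt
  obtain ⟨g, hg, hgi⟩ := M.aug hI' hJ hlt
  rw [Finset.mem_sdiff] at hg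
  have hgC : g ∈ C' := by
    have := hJs hg.1
    rw [Finset.mem_union] at this
    tauto
  rcases hspan g hgC with h | h
  · exact hg.2 h
  · exact h hgi

lemma FinMatroid.extend {E : Type*} [Fintype E] [DecidableEq E]
    (M : FinMatroid E) {I' C' : Finset E} (hI' : M.Indep I') :
    ∀ (n : ℕ) (W : Finset E), M.Indep W → W ⊆ C' ∪ I' → I'.card = W.card + n →
      ∃ W', M.Indep W' ∧ W ⊆ W' ∧ W' ⊆ C' ∪ I' ∧ W'.card = I'.card := by
  intro n
  induction n with
  | zero => intro W hW hWs hc; exact ⟨W, hW, subset_rfl, hWs, by omega⟩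
  | succ n ih =>
    intro W hW hWs hc
    obtain ⟨g, hg, hgi⟩ := M.aug hW hI' (by omega)
    rw [Finset.mem_sdiff] at hg
    have hsub : insert g W ⊆ C' ∪ I' :=
      Finset.insert_subset (Finset.mem_union_right _ hg.1) hWs
    have hcard : (insert g W).card = W.card + 1 := Finset.card_insert_of_notMem hg.2
    obtain ⟨W', h1, h2, h3, h4⟩ := ih (insert g W) hgi hsub (by omega)
    exact ⟨W', h1, (Finset.subset_insert _ _).trans h2, h3, h4⟩

/-- If `B` has the same size as an independent set `A` and the exchange digraph of `A`
has a unique perfect matching on the symmetric difference (from `A` minus `B` to `B`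
minus `A`), then `B` is independent. -/
theorem stmt1 {E : Type*} [Fintype E] [DecidableEq E] (M : FinMatroid E)
    (A B : Finset E) (hA : M.Indep A) (hcard : B.card = A.card)
    (f : E → E)
    (hbij : Set.BijOn f ((A \ B : Finset E) : Set E) ((B \ A : Finset E) : Set E))
    (hedge : ∀ g ∈ A \ B, M.Indep (insert (f g) (A.erase g)))
    (huniq : ∀ f' : E → E,
      Set.BijOn f' ((A \ B : Finset E) : Set E) ((B \ A : Finset E) : Set E) →
      (∀ g ∈ A \ B, M.Indep (insert (f' g) (A.erase g))) →
      ∀ g ∈ A \ B, f' g = f g) :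
    M.Indep B := by
  classical
  by_contra hB
  -- choose a minimum-cardinality dependent subset (circuit) C of B
  obtain ⟨C, hCmem, hCmin⟩ := Finset.exists_min_image
    (B.powerset.filter (fun D => ¬ M.Indep D)) Finset.card
    ⟨B, by simp [hB]⟩
  rw [Finset.mem_filter, Finset.mem_powerset] at hCmem
  obtain ⟨hCB, hCdep⟩ := hCmem
  -- every proper-cardinality subset of C that is a subset of B is independent
  have hmin : ∀ D : Finset E, D ⊆ B → D.card < C.card → M.Indep D := by
    intro D hDB hDc
    by_contra hD
    have := hCmin D (by rw [Finset.mem_filter, Finset.mem_powerset]; exact ⟨hDB, hD⟩)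
    omega
  set SC : Finset E := (A \ B).filter (fun g => f g ∈ C) with hSCdef
  have hSCsub : SC ⊆ A \ B := Finset.filter_subset _ _
  by_cases hcase : ∀ y ∈ SC, ∃ g' ∈ SC, y ≠ g' ∧ M.Indep (insert (f g') (A.erase y))
  · -- every vertex of SC has an out-neighbour: extract a cycle and rotate f
    -- SC is nonempty
    have hCnA : ¬ C ⊆ A := fun h => hCdep (M.subset_indep hA h)
    obtain ⟨z₁, hz₁C, hz₁A⟩ := Finset.not_subset.mp hCnA
    have hz₁BA : z₁ ∈ B \ A := Finset.mem_sdiff.mpr ⟨hCB hz₁C, hz₁A⟩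
    obtain ⟨g₀, hg₀, hg₀z⟩ := hbij.surjOn
      (by exact_mod_cast hz₁BA : z₁ ∈ ((B \ A : Finset E) : Set E))
    have hg₀AB : g₀ ∈ A \ B := by exact_mod_cast hg₀
    have hg₀SC : g₀ ∈ SC := Finset.mem_filter.mpr ⟨hg₀AB, by rw [hg₀z]; exact hz₁C⟩
    choose! succ h1 h2 h3 using hcase
    set u : ℕ → E := fun n => succ^[n] g₀ with hudef
    have hstep : ∀ n, u (n + 1) = succ (u n) := by
      intro n; rw [hudef]; simp [Function.iterate_succ_apply']
    have huSC : ∀ n, u n ∈ SC := by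
      intro n
      induction n with
      | zero => exact hg₀SC
      | succ n ih => rw [hstep]; exact h1 _ ih
    obtain ⟨a, ha, b, hb, hab, huab⟩ := Finset.exists_ne_map_eq_of_card_lt_of_maps_to
      (s := Finset.range (SC.card + 1)) (t := SC) (by simp) (fun n _ => huSC n)
    have hQ : ∃ d, 0 < d ∧ ∃ i, u i = u (i + d) := by
      rcases Nat.lt_or_ge a b with h | h
      · exact ⟨b - a, by omega, a, by rw [huab]; congr 1; omega⟩
      · have h' : b < a := by omega
        exact ⟨a - b, by omega, b, by rw [← huab]; congr 1; omega⟩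
    set d₀ := Nat.find hQ with hd₀def
    obtain ⟨hd₀pos, i₀, hper⟩ := Nat.find_spec hQ
    have hdist : ∀ a b, a < d₀ → b < d₀ → u (i₀ + a) = u (i₀ + b) → a = b := by
      have key : ∀ a b, a < b → b < d₀ → u (i₀ + a) ≠ u (i₀ + b) := by
        intro a b hab' hbd heq
        refine Nat.find_min hQ (show b - a < d₀ by omega) ⟨by omega, i₀ + a, ?_⟩
        rw [heq]; congr 1; omega
      intro a b ha' hb' heq
      rcases Nat.lt_trichotomy a b with h | h | h
      · exact absurd heq (key a b h hb')
      · exact h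
      · exact absurd heq.symm (key b a h ha')
    set Cyc : Finset E := (Finset.range d₀).image (fun k => u (i₀ + k)) with hCycdef
    have hCycSC : Cyc ⊆ SC := by
      intro x hx
      rw [hCycdef, Finset.mem_image] at hx
      obtain ⟨k, _, rfl⟩ := hx
      exact huSC _
    have humem : ∀ k, k ≤ d₀ → u (i₀ + k) ∈ Cyc := by
      intro k hk
      rcases Nat.lt_or_ge k d₀ with h | h
      · exact Finset.mem_image.mpr ⟨k, Finset.mem_range.mpr h, rfl⟩
      · have hkd : k = d₀ := by omega
        subst hkd
        rw [← hper]
        exact Finset.mem_image.mpr ⟨0, Finset.mem_range.mpr hd₀pos, by rw [Nat.add_zero]⟩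
    have hu0 : u i₀ ∈ Cyc := humem 0 (by omega)
    have hsuccCyc : ∀ x ∈ Cyc, succ x ∈ Cyc := by
      intro x hx
      rw [hCycdef, Finset.mem_image] at hx
      obtain ⟨k, hk, rfl⟩ := hx
      rw [Finset.mem_range] at hk
      rw [← hstep (i₀ + k)]
      exact humem (k + 1) (by omega)
    have hcan : ∀ k, k ≤ d₀ → u (i₀ + k) = u (i₀ + k % d₀) := by
      intro k hk
      rcases Nat.lt_or_ge k d₀ with h | h
      · rw [Nat.mod_eq_of_lt h]
      · have hkd : k = d₀ := by omega
        subst hkd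
        rw [Nat.mod_self, Nat.add_zero, ← hper]
    set σ : E → E := fun x => if x ∈ Cyc then succ x else x with hσdef
    have hσCyc : ∀ x ∈ Cyc, σ x = succ x := by
      intro x hx; rw [hσdef]; simp [hx]
    have hσnot : ∀ x, x ∉ Cyc → σ x = x := by
      intro x hx; rw [hσdef]; simp [hx]
    have hσinjCyc : ∀ x ∈ Cyc, ∀ y ∈ Cyc, σ x = σ y → x = y := by
      intro x hx y hy hxy
      rw [hσCyc x hx, hσCyc y hy] at hxy
      rw [hCycdef, Finset.mem_image] at hx hy
      obtain ⟨p, hp, rfl⟩ := hx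
      obtain ⟨q, hq, rfl⟩ := hy
      rw [Finset.mem_range] at hp hq
      rw [← hstep (i₀ + p), ← hstep (i₀ + q)] at hxy
      have h1 : u (i₀ + (p + 1)) = u (i₀ + (p + 1) % d₀) := hcan (p + 1) (by omega)
      have h2 : u (i₀ + (q + 1)) = u (i₀ + (q + 1) % d₀) := hcan (q + 1) (by omega)
      have hmod := hdist ((p + 1) % d₀) ((q + 1) % d₀)
        (Nat.mod_lt _ hd₀pos) (Nat.mod_lt _ hd₀pos)
        (by rw [← h1, ← h2]; exact hxy)
      have ep : (p + 1) % d₀ = if p + 1 = d₀ then 0 else p + 1 := by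
        split
        · rename_i h; rw [h, Nat.mod_self]
        · exact Nat.mod_eq_of_lt (by omega)
      have eq' : (q + 1) % d₀ = if q + 1 = d₀ then 0 else q + 1 := by
        split
        · rename_i h; rw [h, Nat.mod_self]
        · exact Nat.mod_eq_of_lt (by omega)
      rw [ep, eq'] at hmod
      have hpq : p = q := by split_ifs at hmod <;> omega
      rw [hpq]
    have hσsurjCyc : ∀ y ∈ Cyc, ∃ x ∈ Cyc, σ x = y := by
      intro y hy
      rw [hCycdef, Finset.mem_image] at hy
      obtain ⟨b', hb', rfl⟩ := hy
      rw [Finset.mem_range] at hb'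
      rcases Nat.eq_zero_or_pos b' with hb0 | hb0
      · subst hb0
        have hm : u (i₀ + (d₀ - 1)) ∈ Cyc := humem _ (by omega)
        refine ⟨u (i₀ + (d₀ - 1)), hm, ?_⟩
        rw [hσCyc _ hm, ← hstep]
        have he : i₀ + (d₀ - 1) + 1 = i₀ + d₀ := by omega
        rw [he, ← hper, Nat.add_zero]
      · have hm : u (i₀ + (b' - 1)) ∈ Cyc := humem _ (by omega)
        refine ⟨u (i₀ + (b' - 1)), hm, ?_⟩
        rw [hσCyc _ hm, ← hstep]
        congr 1
        omega
    have hσS : Set.MapsTo σ ((A \ B : Finset E) : Set E) ((A \ B : Finset E) : Set E) := by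
      intro x hx
      by_cases hxC : x ∈ Cyc
      · rw [hσCyc x hxC]
        exact_mod_cast hSCsub (h1 x (hCycSC hxC))
      · rw [hσnot x hxC]; exact hx
    have hσinj : Set.InjOn σ ((A \ B : Finset E) : Set E) := by
      intro x hx y hy h
      by_cases hxC : x ∈ Cyc <;> by_cases hyC : y ∈ Cyc
      · exact hσinjCyc x hxC y hyC h
      · exfalso
        rw [hσCyc x hxC, hσnot y hyC] at h
        exact hyC (h ▸ hsuccCyc x hxC)
      · exfalso
        rw [hσnot x hxC, hσCyc y hyC] at h
        exact hxC (h ▸ (hsuccCyc y hyC))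
      · rwa [hσnot x hxC, hσnot y hyC] at h
    have hσsurj : Set.SurjOn σ ((A \ B : Finset E) : Set E) ((A \ B : Finset E) : Set E) := by
      intro y hy
      by_cases hyC : y ∈ Cyc
      · obtain ⟨x, hxC, hxy⟩ := hσsurjCyc y hyC
        exact ⟨x, by exact_mod_cast hSCsub (hCycSC hxC), hxy⟩
      · exact ⟨y, hy, hσnot y hyC⟩
    have hσbij : Set.BijOn σ ((A \ B : Finset E) : Set E) ((A \ B : Finset E) : Set E) :=
      ⟨hσS, hσinj, hσsurj⟩
    have hbij' : Set.BijOn (fun x => f (σ x)) ((A \ B : Finset E) : Set E)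
        ((B \ A : Finset E) : Set E) := hbij.comp hσbij
    have hedge' : ∀ g ∈ A \ B, M.Indep (insert (f (σ g)) (A.erase g)) := by
      intro g hg
      by_cases hgC : g ∈ Cyc
      · rw [hσCyc g hgC]
        exact h3 g (hCycSC hgC)
      · rw [hσnot g hgC]
        exact hedge g hg
    have hfinal : f (σ (u i₀)) = f (u i₀) :=
      huniq (fun x => f (σ x)) hbij' hedge' (u i₀) (hSCsub (hCycSC hu0))
    rw [hσCyc _ hu0] at hfinal
    have hmem1 : succ (u i₀) ∈ ((A \ B : Finset E) : Set E) := by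
      exact_mod_cast hSCsub (h1 _ (huSC i₀))
    have hmem2 : u i₀ ∈ ((A \ B : Finset E) : Set E) := by
      exact_mod_cast hSCsub (huSC i₀)
    exact h2 _ (huSC i₀) (hbij.injOn hmem1 hmem2 hfinal).symm
  · push_neg at hcase
    obtain ⟨y, hySC, hy⟩ := hcase
    have hyAB : y ∈ A \ B := hSCsub hySC
    have hzC : f y ∈ C := (Finset.mem_filter.mp hySC).2
    have hzBA : f y ∈ B \ A := by
      have := hbij.mapsTo (by exact_mod_cast hyAB : y ∈ ((A \ B : Finset E) : Set E))
      exact_mod_cast this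
    set z : E := f y with hzdef
    set I' : Finset E := A.erase y with hI'def
    have hI' : M.Indep I' := M.subset_indep hA (Finset.erase_subset _ _)
    set C' : Finset E := C.erase z with hC'def
    have hC'B : C' ⊆ B := (Finset.erase_subset _ _).trans hCB
    have hC' : M.Indep C' := hmin C' hC'B (Finset.card_erase_lt_of_mem hzC)
    have hspan : ∀ x ∈ C', x ∈ I' ∨ ¬ M.Indep (insert x I') := by
      intro x hx
      have hxz : x ≠ z := Finset.ne_of_mem_erase hx
      have hxC : x ∈ C := Finset.mem_of_mem_erase hx
      have hxB : x ∈ B := hCB hxC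
      by_cases hxA : x ∈ A
      · left
        refine Finset.mem_erase.mpr ⟨?_, hxA⟩
        rintro rfl
        exact (Finset.mem_sdiff.mp hyAB).2 hxB
      · right
        obtain ⟨g, hg, hgx⟩ := hbij.surjOn
          (by exact_mod_cast Finset.mem_sdiff.mpr ⟨hxB, hxA⟩ :
            x ∈ ((B \ A : Finset E) : Set E))
        have hgAB : g ∈ A \ B := by exact_mod_cast hg
        have hgSC : g ∈ SC := Finset.mem_filter.mpr ⟨hgAB, by rw [hgx]; exact hxC⟩
        have hgy : y ≠ g := by
          rintro rfl
          exact hxz hgx.symm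
        have := hy g hgSC hgy
        rwa [hgx] at this
    have hC'card : C'.card ≤ I'.card :=
      M.card_le_of_span hI' hspan hC' Finset.subset_union_left
    obtain ⟨W, hW, hC'W, hWsub, hWcard⟩ :=
      M.extend hI' (I'.card - C'.card) C' hC' Finset.subset_union_left (by omega)
    have hzI' : z ∉ I' := by
      intro h
      exact (Finset.mem_sdiff.mp hzBA).2 (Finset.mem_of_mem_erase h)
    have hJ0 : M.Indep (insert z I') := hedge y hyAB
    have hJ0card : (insert z I').card = I'.card + 1 := Finset.card_insert_of_notMem hzI'
    obtain ⟨g, hg, hgi⟩ := M.aug hW hJ0 (by omega)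
    rw [Finset.mem_sdiff] at hg
    rcases Finset.mem_insert.mp hg.1 with hgz | hgI'
    · -- g = z : insert z W ⊇ C, so C independent, contradiction
      subst hgz
      have hCsub : C ⊆ insert z W := by
        have : C = insert z C' := (Finset.insert_erase hzC).symm
        rw [this]
        exact Finset.insert_subset_insert _ hC'W
      exact hCdep (M.subset_indep hgi hCsub)
    · -- g ∈ I' : insert g W is too large
      have hsub : insert g W ⊆ C' ∪ I' :=
        Finset.insert_subset (Finset.mem_union_right _ hgI') hWsub
      have := M.card_le_of_span hI' hspan hgi hsub
      rw [Finset.card_insert_of_notMem hg.2, hWcard] at this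
      omega
end

section
/- Let M = (E, I) be a matroid with rank function r, A ∈ I an independent set, and B ⊆ E with |B| = |A|, r(A ∪ B) = |A|, such that the exchange digraph D_M(A) contains a unique perfect matching on A Δ B. Then for any s ∉ A ∪ B with A ∪ {s} ∈ I, we also have B ∪ {s} ∈ I. -/
lemma exists_local_sink {α : Type*} [DecidableEq α] (AB BA : Finset α) (f : α → α)
    (hbij : Set.BijOn f ↑AB ↑BA) (R : α → α → Prop)
    (huniq : ∀ f' : α → α, Set.BijOn f' ↑AB ↑BA → (∀ g ∈ AB, R g (f' g)) →
      ∀ g ∈ AB, f' g = f g)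
    (hR : ∀ g ∈ AB, R g (f g))
    (S : Finset α) (hS : S ⊆ AB) (hSne : S.Nonempty) :
    ∃ a ∈ S, ∀ b ∈ S.image f, R a b → b = f a := by
  by_contra hcon
  push_neg at hcon
  have hstep : ∀ a : α, ∃ a' : α, a ∈ S → a' ∈ S ∧ R a (f a') ∧ f a' ≠ f a := by
    intro a
    by_cases ha : a ∈ S
    · obtain ⟨b, hb, hRb, hbne⟩ := hcon a ha
      obtain ⟨a', ha', rfl⟩ := Finset.mem_image.1 hb
      exact ⟨a', fun _ => ⟨ha', hRb, hbne⟩⟩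
    · exact ⟨a, fun h => absurd h ha⟩
  choose h hh using hstep
  have hmaps : ∀ a ∈ S, h a ∈ S := fun a ha => (hh a ha).1
  have hne : ∀ a ∈ S, h a ≠ a := by
    intro a ha e
    exact (hh a ha).2.2 (by rw [e])
  obtain ⟨a0, ha0⟩ := hSne
  have hit : ∀ n, h^[n] a0 ∈ S := by
    intro n; induction n with
    | zero => simpa using ha0
    | succ n ih => rw [Function.iterate_succ_apply']; exact hmaps _ ih
  obtain ⟨x, hx, y, hy, hxy, hfeq⟩ :=
    Finset.exists_ne_map_eq_of_card_lt_of_maps_to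
      (s := Finset.range (S.card + 1)) (t := S)
      (by simp) (fun n _ => hit n)
  have key : ∀ i j : ℕ, i < j → h^[i] a0 = h^[j] a0 → False := by
    intro i j hij heq
    set c := h^[i] a0 with hc
    set p := j - i with hpdef
    have hp : 0 < p := by omega
    have hcS : c ∈ S := hit i
    have hitc : ∀ n, h^[n] c ∈ S := by
      intro n; induction n with
      | zero => simpa using hcS
      | succ n ih => rw [Function.iterate_succ_apply' h n c]; exact hmaps _ ih
    have hpc : h^[p] c = c := by
      rw [hc, ← Function.iterate_add_apply, hpdef]
      rw [show j - i + i = j by omega]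
      exact heq.symm
    set P : Finset α := (Finset.range p).image (fun n => h^[n] c) with hP
    have hPc : c ∈ P := Finset.mem_image.2 ⟨0, by simpa using hp, by simp⟩
    have hPS : P ⊆ S := by
      intro a ha
      obtain ⟨n, _, rfl⟩ := Finset.mem_image.1 ha
      exact hitc n
    have hPmaps : ∀ a ∈ P, h a ∈ P := by
      intro a ha
      obtain ⟨n, hn, rfl⟩ := Finset.mem_image.1 ha
      rw [Finset.mem_range] at hn
      rw [← Function.iterate_succ_apply' h n c]
      rcases lt_or_eq_of_le (Nat.succ_le_of_lt hn) with h1 | h1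
      · exact Finset.mem_image.2 ⟨n + 1, Finset.mem_range.2 h1, rfl⟩
      · rw [h1, hpc]; exact hPc
    have hsub : P ⊆ P.image h := by
      intro a ha
      obtain ⟨n, hn, rfl⟩ := Finset.mem_image.1 ha
      rw [Finset.mem_range] at hn
      rcases Nat.eq_zero_or_pos n with h1 | h1
      · subst h1
        refine Finset.mem_image.2 ⟨h^[p-1] c, Finset.mem_image.2 ⟨p - 1, Finset.mem_range.2 (by omega), rfl⟩, ?_⟩
        rw [← Function.iterate_succ_apply' h (p-1) c, Nat.succ_eq_add_one, show p - 1 + 1 = p by omega, hpc]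
        simp
      · refine Finset.mem_image.2 ⟨h^[n-1] c, Finset.mem_image.2 ⟨n - 1, Finset.mem_range.2 (by omega), rfl⟩, ?_⟩
        rw [← Function.iterate_succ_apply' h (n-1) c, Nat.succ_eq_add_one, show n - 1 + 1 = n by omega]
    have himg : P.image h = P :=
      Finset.eq_of_subset_of_card_le (fun a ha => by
        obtain ⟨b, hb, rfl⟩ := Finset.mem_image.1 ha; exact hPmaps b hb)
        (le_trans (Finset.card_le_card hsub) (le_refl _))
    have hinj : Set.InjOn h ↑P :=
      Finset.injOn_of_card_image_eq (by rw [himg])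
    set h' : α → α := fun a => if a ∈ P then h a else a with hh'
    have hSAB : ↑S ⊆ (↑AB : Set α) := Finset.coe_subset.2 hS
    have hPAB : ∀ a ∈ P, a ∈ AB := fun a ha => hS (hPS ha)
    have h'bij : Set.BijOn h' ↑AB ↑AB := by
      refine ⟨?_, ?_, ?_⟩
      · intro a ha
        simp only [hh']
        split
        · next hmem => exact hSAB (hPS (hPmaps a hmem))
        · exact ha
      · intro u hu v hv huv
        simp only [hh'] at huv
        by_cases hu' : u ∈ P <;> by_cases hv' : v ∈ P <;> simp [hu', hv'] at huv
        · exact hinj hu' hv' huv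
        · exact absurd (huv ▸ hPmaps u hu') hv'
        · exact absurd (huv.symm ▸ hPmaps v hv') hu'
        · exact huv
      · intro y hy
        by_cases hy' : y ∈ P
        · rw [← himg] at hy'
          obtain ⟨x', hx', rfl⟩ := Finset.mem_image.1 hy'
          exact ⟨x', Finset.mem_coe.2 (hPAB x' hx'), by simp [hh', hx']⟩
        · exact ⟨y, hy, by simp [hh', hy']⟩
    have hf'bij : Set.BijOn (fun a => f (h' a)) ↑AB ↑BA := hbij.comp h'bij
    have hedges' : ∀ g ∈ AB, R g (f (h' g)) := by
      intro g hg
      simp only [hh']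
      split
      · next hmem => exact (hh g (hPS hmem)).2.1
      · exact hR g hg
    have := huniq _ hf'bij hedges' c (hPAB c hPc)
    simp only [hh', hPc, if_pos] at this
    have hcc : h c = c := hbij.injOn (hSAB (Finset.mem_coe.2 (hPS (hPmaps c hPc)))) (hSAB (Finset.mem_coe.2 (hPS hPc))) this
    exact hne c hcS hcc
  rcases hxy.lt_or_gt with hlt | hlt
  · exact key _ _ hlt hfeq
  · exact key _ _ hlt hfeq.symm

section aux

variable {E : Type*} [Fintype E] [DecidableEq E]

noncomputable def FinMatroid.toM (M : FinMatroid E) : Matroid E :=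
  (IndepMatroid.ofFinset Set.univ M.Indep M.empty_indep
    (fun I J hJ hIJ => M.subset_indep hJ hIJ)
    (fun I J hI hJ hIJ => by
      obtain ⟨g, hg, hgi⟩ := M.aug hI hJ hIJ
      simp only [Finset.mem_sdiff] at hg
      exact ⟨g, hg.1, hg.2, hgi⟩)
    (fun I _ => Set.subset_univ _)).matroid

@[simp] lemma FinMatroid.toM_indep (M : FinMatroid E) (I : Finset E) :
    M.toM.Indep ↑I ↔ M.Indep I := by
  simp [FinMatroid.toM]

@[simp] lemma FinMatroid.toM_ground (M : FinMatroid E) : M.toM.E = Set.univ := rfl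

end aux


/-- Under the unique-perfect-matching hypothesis and rank of the union equal to the
cardinality of `A`, adding an element `s` outside `A ∪ B` that keeps `A` independent
also keeps `B` independent. -/
theorem stmt2 {E : Type*} [Fintype E] [DecidableEq E] (M : FinMatroid E)
    (A B : Finset E) (hA : M.Indep A) (hcard : B.card = A.card)
    (hrank : M.rank (A ∪ B) = A.card)
    (f : E → E)
    (hbij : Set.BijOn f ((A \ B : Finset E) : Set E) ((B \ A : Finset E) : Set E))
    (hedge : ∀ g ∈ A \ B, M.Indep (insert (f g) (A.erase g)))
    (huniq : ∀ f' : E → E,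
      Set.BijOn f' ((A \ B : Finset E) : Set E) ((B \ A : Finset E) : Set E) →
      (∀ g ∈ A \ B, M.Indep (insert (f' g) (A.erase g))) →
      ∀ g ∈ A \ B, f' g = f g)
    (s : E) (hs : s ∉ A ∪ B) (hAs : M.Indep (insert s A)) :
    M.Indep (insert s B) := by
  classical
  set N := M.toM with hN
  have hground : ∀ x : E, x ∈ N.E := by simp [hN]
  have hNA : N.Indep ↑A := (M.toM_indep A).2 hA
  -- every element of B lies in the closure of A
  have hBcl : ∀ b ∈ B, (b : E) ∈ N.closure ↑A := by
    intro b hb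
    by_cases hba : b ∈ A
    · exact N.subset_closure ↑A (by simp [hN]) hba
    · have hdep : ¬ M.Indep (insert b A) := by
        intro hind
        have hmem : (A.card + 1) ∈ {t | ∃ I : Finset E, I ⊆ A ∪ B ∧ M.Indep I ∧ I.card = t} :=
          ⟨insert b A, by
            intro x hx
            rcases Finset.mem_insert.1 hx with rfl | hx
            · exact Finset.mem_union_right _ hb
            · exact Finset.mem_union_left _ hx,
            hind, by rw [Finset.card_insert_of_notMem hba]⟩
        have hbdd : BddAbove {t | ∃ I : Finset E, I ⊆ A ∪ B ∧ M.Indep I ∧ I.card = t} :=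
          ⟨(A ∪ B).card, fun t ⟨I, hI, _, ht⟩ => ht ▸ Finset.card_le_card hI⟩
        have hle := le_csSup hbdd hmem
        rw [FinMatroid.rank] at hrank
        omega
      have hNdep : ¬ N.Indep (insert (b : E) ↑A) := by
        rw [← Finset.coe_insert, hN, M.toM_indep]; exact hdep
      have hiff := hNA.insert_indep_iff_of_notMem (by simpa using hba)
      by_contra hbc
      exact hNdep (hiff.2 ⟨hground b, hbc⟩)
  -- B is independent
  have hBindep : M.Indep B := by
    by_contra hBdep
    obtain ⟨C, hCmem, hCmin⟩ := Finset.exists_min_image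
      (((B.powerset).filter fun C => ¬ M.Indep C)) Finset.card
      ⟨B, Finset.mem_filter.2 ⟨Finset.mem_powerset.2 le_rfl, hBdep⟩⟩
    rw [Finset.mem_filter, Finset.mem_powerset] at hCmem
    obtain ⟨hCB, hCdep⟩ := hCmem
    have hProper : ∀ x ∈ C, M.Indep (C.erase x) := by
      intro x hx
      by_contra hdep'
      have hmem : C.erase x ∈ (B.powerset).filter fun C => ¬ M.Indep C :=
        Finset.mem_filter.2 ⟨Finset.mem_powerset.2 ((Finset.erase_subset _ _).trans hCB), hdep'⟩
      have h1 := hCmin _ hmem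
      have h2 := Finset.card_erase_of_mem hx
      have h3 : 0 < C.card := Finset.card_pos.2 ⟨x, hx⟩
      omega
    have hD : (C \ A).Nonempty := by
      rw [Finset.sdiff_nonempty]
      intro hsub
      exact hCdep (M.subset_indep hA hsub)
    have hDBA : C \ A ⊆ B \ A := by
      intro x hx
      rw [Finset.mem_sdiff] at hx ⊢
      exact ⟨hCB hx.1, hx.2⟩
    set S := (A \ B).filter (fun a => f a ∈ C) with hSdef
    have hSsub : S ⊆ A \ B := Finset.filter_subset _ _
    have hSne : S.Nonempty := by
      obtain ⟨b0, hb0⟩ := hD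
      obtain ⟨a0, ha0, hfa0⟩ := hbij.surjOn (show (b0 : E) ∈ ((B \ A : Finset E) : Set E) by
        exact_mod_cast hDBA hb0)
      refine ⟨a0, Finset.mem_filter.2 ⟨by exact_mod_cast ha0, ?_⟩⟩
      rw [hfa0]
      exact (Finset.mem_sdiff.1 hb0).1
    obtain ⟨astar, haS, hstar⟩ := exists_local_sink (A \ B) (B \ A) f hbij
      (fun g b => M.Indep (insert b (A.erase g)))
      huniq hedge S hSsub hSne
    have haAB : astar ∈ A \ B := hSsub haS
    set bstar := f astar with hbstar
    have hbC : bstar ∈ C := (Finset.mem_filter.1 haS).2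
    have hbBA : bstar ∈ B \ A := by
      have := hbij.mapsTo (show (astar : E) ∈ ((A \ B : Finset E) : Set E) by exact_mod_cast haAB)
      exact_mod_cast this
    -- minimal closure-generating subsets for elements of (C \ A).erase bstar
    have hex : ∀ b : E, ∃ Cb : Finset E, b ∈ (C \ A).erase bstar →
        Cb ⊆ A ∧ (b : E) ∈ N.closure ↑Cb ∧ ∀ a ∈ Cb, M.Indep (insert b (A.erase a)) := by
      intro b
      by_cases hb : b ∈ (C \ A).erase bstar
      swap
      · exact ⟨∅, fun h => absurd h hb⟩
      have hbD : b ∈ C \ A := Finset.mem_of_mem_erase hb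
      have hbB : b ∈ B := hCB (Finset.mem_sdiff.1 hbD).1
      have hbA : b ∉ A := (Finset.mem_sdiff.1 hbD).2
      obtain ⟨Cb, hCbmem, hCbmin⟩ := Finset.exists_min_image
        ((A.powerset).filter fun X : Finset E => (b : E) ∈ N.closure ↑X) (fun X => X.card)
        ⟨A, Finset.mem_filter.2 ⟨Finset.mem_powerset.2 le_rfl, hBcl b hbB⟩⟩
      rw [Finset.mem_filter, Finset.mem_powerset] at hCbmem
      obtain ⟨hCbA, hbcl⟩ := hCbmem
      refine ⟨Cb, fun _ => ⟨hCbA, hbcl, ?_⟩⟩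
      intro a ha
      by_contra hnind
      have haA : a ∈ A := hCbA ha
      have hIae : N.Indep ↑(A.erase a) := (M.toM_indep _).2 (M.subset_indep hA (Finset.erase_subset _ _))
      have hbnotin : (b : E) ∉ (↑(A.erase a) : Set E) := by
        simp [hbA]
      have hbclae : (b : E) ∈ N.closure ↑(A.erase a) := by
        by_contra hbc
        exact hnind (by
          have := (hIae.insert_indep_iff_of_notMem hbnotin).2 ⟨hground b, hbc⟩
          rw [← Finset.coe_insert, hN, M.toM_indep] at this
          exact this)
      have hbnotcl : (b : E) ∉ N.closure ↑(Cb.erase a) := by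
        intro hcl
        have hmem : Cb.erase a ∈ (A.powerset).filter (fun X : Finset E => (b : E) ∈ N.closure ↑X) :=
          Finset.mem_filter.2 ⟨Finset.mem_powerset.2 ((Finset.erase_subset _ _).trans hCbA), hcl⟩
        have h1 := hCbmin _ hmem
        have h2 := Finset.card_erase_of_mem ha
        have h3 : 0 < Cb.card := Finset.card_pos.2 ⟨a, ha⟩
        omega
      have hins : (↑Cb : Set E) = insert (a : E) ↑(Cb.erase a) := by
        rw [← Finset.coe_insert, Finset.insert_erase ha]
      have hacl : (a : E) ∈ N.closure (insert (b : E) ↑(Cb.erase a)) :=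
        Matroid.mem_closure_insert hbnotcl (by rw [← hins]; exact hbcl)
      have hsub2 : insert (b : E) (↑(Cb.erase a) : Set E) ⊆ N.closure ↑(A.erase a) := by
        refine Set.insert_subset hbclae ?_
        refine Set.Subset.trans ?_ (N.subset_closure ↑(A.erase a) (by simp [hN]))
        exact_mod_cast Finset.erase_subset_erase a hCbA
      have hafin : (a : E) ∈ N.closure ↑(A.erase a) :=
        (Matroid.closure_subset_closure_of_subset_closure hsub2) hacl
      have hnot := hNA.notMem_closure_diff_of_mem (show (a : E) ∈ (↑A : Set E) by exact_mod_cast haA)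
      rw [← Finset.coe_erase] at hnot
      exact hnot hafin
    choose Cb hCb using hex
    set Z : Finset E := (C ∩ A) ∪ ((C \ A).erase bstar).biUnion Cb with hZ
    have hZA : Z ⊆ A := by
      intro x hx
      rcases Finset.mem_union.1 hx with hx | hx
      · exact (Finset.mem_inter.1 hx).2
      · obtain ⟨b, hb, hxb⟩ := Finset.mem_biUnion.1 hx
        exact (hCb b hb).1 hxb
    have hCercl : ∀ x ∈ C.erase bstar, (x : E) ∈ N.closure ↑Z := by
      intro x hx
      have hxC : x ∈ C := Finset.mem_of_mem_erase hx
      by_cases hxA : x ∈ A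
      · refine N.subset_closure ↑Z (by simp [hN]) ?_
        exact_mod_cast Finset.mem_union_left _ (Finset.mem_inter.2 ⟨hxC, hxA⟩)
      · have hxD : x ∈ (C \ A).erase bstar :=
          Finset.mem_erase.2 ⟨(Finset.mem_erase.1 hx).1, Finset.mem_sdiff.2 ⟨hxC, hxA⟩⟩
        have hxcl := (hCb x hxD).2.1
        refine N.closure_subset_closure ?_ hxcl
        exact_mod_cast (Finset.subset_biUnion_of_mem Cb hxD).trans Finset.subset_union_right
    have hbstarcl : (bstar : E) ∈ N.closure ↑Z := by
      have hCind : N.Indep ↑(C.erase bstar) := (M.toM_indep _).2 (hProper bstar hbC)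
      have hnotmem : (bstar : E) ∉ (↑(C.erase bstar) : Set E) := by simp
      have hb1 : (bstar : E) ∈ N.closure ↑(C.erase bstar) := by
        by_contra hbc
        have := (hCind.insert_indep_iff_of_notMem hnotmem).2 ⟨hground bstar, hbc⟩
        rw [← Finset.coe_insert, Finset.insert_erase hbC, hN, M.toM_indep] at this
        exact hCdep this
      refine (Matroid.closure_subset_closure_of_subset_closure ?_) hb1
      intro x hx
      exact hCercl x (by exact_mod_cast hx)
    have hastarZ : astar ∈ Z := by
      by_contra hnz
      have hZae : (↑Z : Set E) ⊆ (↑(A.erase astar) : Set E) := by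
        intro x hx
        have hxZ : x ∈ Z := by exact_mod_cast hx
        exact_mod_cast Finset.mem_erase.2 ⟨fun h => hnz (by rw [← h]; exact hxZ), hZA hxZ⟩
      have hbin : (bstar : E) ∈ N.closure ↑(A.erase astar) :=
        N.closure_subset_closure hZae hbstarcl
      have hind : N.Indep (insert (bstar : E) ↑(A.erase astar)) := by
        rw [← Finset.coe_insert, hN, M.toM_indep]
        exact hedge astar haAB
      have hIae : N.Indep ↑(A.erase astar) :=
        (M.toM_indep _).2 (M.subset_indep hA (Finset.erase_subset _ _))
      have hnotin : (bstar : E) ∉ (↑(A.erase astar) : Set E) := by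
        simp [(Finset.mem_sdiff.1 hbBA).2]
      exact ((hIae.insert_indep_iff_of_notMem hnotin).1 hind).2 hbin
    have hastarnC : astar ∉ C ∩ A := by
      intro h
      exact (Finset.mem_sdiff.1 haAB).2 (hCB (Finset.mem_inter.1 h).1)
    have : astar ∈ ((C \ A).erase bstar).biUnion Cb := by
      rcases Finset.mem_union.1 hastarZ with h | h
      · exact absurd h hastarnC
      · exact h
    obtain ⟨b, hbDe, haCb⟩ := Finset.mem_biUnion.1 this
    have hedgeb : M.Indep (insert b (A.erase astar)) := (hCb b hbDe).2.2 astar haCb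
    have hbC' : b ∈ C := (Finset.mem_sdiff.1 (Finset.mem_of_mem_erase hbDe)).1
    have hbBA' : b ∈ B \ A := hDBA (Finset.mem_of_mem_erase hbDe)
    obtain ⟨a1, ha1, hfa1⟩ := hbij.surjOn (show (b : E) ∈ ((B \ A : Finset E) : Set E) by
      exact_mod_cast hbBA')
    have ha1S : a1 ∈ S := Finset.mem_filter.2 ⟨by exact_mod_cast ha1, by rw [hfa1]; exact hbC'⟩
    have hbimg : b ∈ S.image f := Finset.mem_image.2 ⟨a1, ha1S, hfa1⟩
    have := hstar b hbimg hedgeb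
    exact (Finset.mem_erase.1 hbDe).1 this
  -- final step
  have hNB : N.Indep ↑B := (M.toM_indep B).2 hBindep
  have hsA : s ∉ A := fun h => hs (Finset.mem_union_left _ h)
  have hsB : s ∉ B := fun h => hs (Finset.mem_union_right _ h)
  have hsnotclA : (s : E) ∉ N.closure ↑A := by
    have hind : N.Indep (insert (s : E) ↑A) := by
      rw [← Finset.coe_insert, hN, M.toM_indep]; exact hAs
    exact ((hNA.insert_indep_iff_of_notMem (by simpa using hsA)).1 hind).2
  have hclBA : N.closure ↑B ⊆ N.closure ↑A :=
    Matroid.closure_subset_closure_of_subset_closure (fun x hx => hBcl x (by exact_mod_cast hx))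
  have hsnB : (s : E) ∉ N.closure ↑B := fun h => hsnotclA (hclBA h)
  have hfinal : N.Indep (insert (s : E) ↑B) :=
    (hNB.insert_indep_iff_of_notMem (by simpa using hsB)).2 ⟨hground s, hsnB⟩
  rw [← Finset.coe_insert, hN, M.toM_indep] at hfinal
  exact hfinal
end

section
/- Given matroids M_1, …, M_n on a common finite ground set E, the family of sets of the form I_1 ∪ … ∪ I_n with each I_i independent in M_i forms the independent sets of a matroid (the matroid union). -/
section aux
variable {E : Type*} [Fintype E] [DecidableEq E] {n : ℕ}

/-- Any union representation can be made disjoint. -/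
lemma exists_disjoint_rep (M : Fin n → FinMatroid E) (S : Finset E)
    (h : ∃ I : Fin n → Finset E, (∀ i, (M i).Indep (I i)) ∧ S = Finset.univ.biUnion I) :
    ∃ I : Fin n → Finset E, (∀ i, (M i).Indep (I i)) ∧
      (∀ a b, a ≠ b → Disjoint (I a) (I b)) ∧ S = Finset.univ.biUnion I := by
  classical
  obtain ⟨I, hind, hS⟩ := h
  refine ⟨fun i => (I i).filter (fun x => ∀ j, j < i → x ∉ I j), fun i => ?_, ?_, ?_⟩
  · exact (M i).subset_indep (hind i) (Finset.filter_subset _ _)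
  · have key : ∀ a b : Fin n, a < b →
        Disjoint ((I a).filter (fun x => ∀ j, j < a → x ∉ I j))
          ((I b).filter (fun x => ∀ j, j < b → x ∉ I j)) := by
      intro a b hab
      rw [Finset.disjoint_left]
      intro x hxa hxb
      exact (Finset.mem_filter.1 hxb).2 a hab (Finset.mem_filter.1 hxa).1
    intro a b hab
    rcases lt_or_gt_of_ne hab with h' | h'
    · exact key a b h'
    · exact (key b a h').symm
  · rw [hS]
    ext x
    simp only [Finset.mem_biUnion, Finset.mem_univ, true_and, Finset.mem_filter]
    constructor
    · rintro ⟨i, hi⟩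
      have hsne : (Finset.univ.filter (fun j => x ∈ I j)).Nonempty :=
        ⟨i, Finset.mem_filter.2 ⟨Finset.mem_univ _, hi⟩⟩
      set m := (Finset.univ.filter (fun j => x ∈ I j)).min' hsne with hmdef
      have hmmem : x ∈ I m :=
        (Finset.mem_filter.1 ((Finset.univ.filter (fun j => x ∈ I j)).min'_mem hsne)).2
      refine ⟨m, hmmem, fun j hj hxj => ?_⟩
      have hjm : j ∈ Finset.univ.filter (fun j => x ∈ I j) :=
        Finset.mem_filter.2 ⟨Finset.mem_univ _, hxj⟩
      have := Finset.min'_le _ j hjm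
      exact absurd (lt_of_lt_of_le hj this) (lt_irrefl _)
    · rintro ⟨i, hi, _⟩
      exact ⟨i, hi⟩

end aux

/-- Matroid union: the unions of independent sets of matroids on a common ground set
form the independent sets of a matroid. -/
theorem stmt3 {E : Type*} [Fintype E] [DecidableEq E] {n : ℕ}
    (M : Fin n → FinMatroid E) :
    ∃ Mu : FinMatroid E, ∀ S : Finset E,
      Mu.Indep S ↔ ∃ I : Fin n → Finset E,
        (∀ i, (M i).Indep (I i)) ∧ S = Finset.univ.biUnion I := by
  classical
  set UInd : Finset E → Prop := fun S => ∃ I : Fin n → Finset E,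
    (∀ i, (M i).Indep (I i)) ∧ S = Finset.univ.biUnion I with hUInd
  have hempty : UInd ∅ := by
    refine ⟨fun _ => ∅, fun i => (M i).empty_indep, ?_⟩
    ext x; simp
  have hsubset : ∀ ⦃I J : Finset E⦄, UInd I → J ⊆ I → UInd J := by
    rintro I J ⟨A, hA, hIA⟩ hJI
    refine ⟨fun i => A i ∩ J, fun i => (M i).subset_indep (hA i) Finset.inter_subset_left, ?_⟩
    ext x
    simp only [Finset.mem_biUnion, Finset.mem_univ, true_and, Finset.mem_inter]
    constructor
    · intro hx
      have : x ∈ I := hJI hx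
      rw [hIA] at this
      obtain ⟨i, _, hi⟩ := Finset.mem_biUnion.1 this
      exact ⟨i, hi, hx⟩
    · rintro ⟨i, _, hx⟩; exact hx
  have haug : ∀ ⦃I J : Finset E⦄, UInd I → UInd J → I.card < J.card →
      ∃ g ∈ J \ I, UInd (insert g I) := by
    intro I J hI hJ hcard
    obtain ⟨A₀, hA₀, hA₀d, hIA₀⟩ := exists_disjoint_rep M I hI
    obtain ⟨B₀, hB₀, hB₀d, hJB₀⟩ := exists_disjoint_rep M J hJ
    set P : (Fin n → Finset E) × (Fin n → Finset E) → Prop := fun p =>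
      (∀ i, (M i).Indep (p.1 i)) ∧ (∀ a b, a ≠ b → Disjoint (p.1 a) (p.1 b)) ∧
      I = Finset.univ.biUnion p.1 ∧
      (∀ i, (M i).Indep (p.2 i)) ∧ (∀ a b, a ≠ b → Disjoint (p.2 a) (p.2 b)) ∧
      J = Finset.univ.biUnion p.2 with hP
    set f : (Fin n → Finset E) × (Fin n → Finset E) → ℕ :=
      fun p => ∑ k : Fin n, ((p.1 k) ∩ (p.2 k)).card with hf
    have hne : (Finset.univ.filter P).Nonempty :=
      ⟨(A₀, B₀), Finset.mem_filter.2 ⟨Finset.mem_univ _, hA₀, hA₀d, hIA₀, hB₀, hB₀d, hJB₀⟩⟩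
    obtain ⟨p, hp, hmax⟩ := Finset.exists_max_image _ f hne
    obtain ⟨hA, hAd, hIA, hB, hBd, hJB⟩ := (Finset.mem_filter.1 hp).2
    set A := p.1 with hAdef
    set B := p.2 with hBdef
    have hsum : ∑ k : Fin n, (A k).card < ∑ k : Fin n, (B k).card := by
      rw [← Finset.card_biUnion (fun a _ b _ hab => hAd a b hab),
        ← Finset.card_biUnion (fun a _ b _ hab => hBd a b hab), ← hIA, ← hJB]
      exact hcard
    have hex : ∃ k, (A k).card < (B k).card := by
      by_contra hcon
      push_neg at hcon
      exact absurd (Finset.sum_le_sum fun k _ => hcon k) (not_le.2 hsum)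
    obtain ⟨k, hk⟩ := hex
    obtain ⟨g, hg, hgind⟩ := (M k).aug (hA k) (hB k) hk
    rw [Finset.mem_sdiff] at hg
    obtain ⟨hgB, hgA⟩ := hg
    have hgJ : g ∈ J := by rw [hJB]; exact Finset.mem_biUnion.2 ⟨k, Finset.mem_univ _, hgB⟩
    have hgI : g ∉ I := by
      intro hgImem
      rw [hIA] at hgImem
      obtain ⟨l, -, hgl⟩ := Finset.mem_biUnion.1 hgImem
      have hlk : l ≠ k := fun h => hgA (h ▸ hgl)
      set A' : Fin n → Finset E := fun m =>
        if m = k then insert g (A k) else if m = l then (A l).erase g else A m with hA'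
      have hA'k : A' k = insert g (A k) := by simp [hA']
      have hA'l : A' l = (A l).erase g := by simp [hA', hlk]
      have hA'm : ∀ m, m ≠ k → m ≠ l → A' m = A m := by
        intro m h1 h2; simp [hA', h1, h2]
      have hgnot : ∀ m, m ≠ l → g ∉ A m := fun m hm hgm =>
        (Finset.disjoint_left.1 (hAd m l hm) hgm) hgl
      have hsub : ∀ m, m ≠ k → A' m ⊆ A m := by
        intro m h1
        by_cases h2 : m = l
        · rw [h2, hA'l]; exact h2 ▸ Finset.erase_subset _ _
        · rw [hA'm m h1 h2]
      have hkey : ∀ b, b ≠ k → Disjoint (A' k) (A' b) := by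
        intro b hbk
        rw [hA'k, Finset.disjoint_left]
        intro x hx hxb
        rcases Finset.mem_insert.1 hx with rfl | hx
        · by_cases hbl : b = l
          · rw [hbl, hA'l] at hxb
            exact (Finset.mem_erase.1 hxb).1 rfl
          · exact hgnot b hbl (hsub b hbk hxb)
        · exact Finset.disjoint_left.1 (hAd k b (fun h => hbk h.symm)) hx (hsub b hbk hxb)
      have hP' : P (A', B) := by
        refine ⟨?_, ?_, ?_, hB, hBd, hJB⟩
        · intro i
          show (M i).Indep (A' i)
          by_cases h1 : i = k
          · rw [h1, hA'k]; exact hgind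
          · by_cases h2 : i = l
            · rw [h2, hA'l]; exact (M l).subset_indep (hA l) (Finset.erase_subset _ _)
            · rw [hA'm i h1 h2]; exact hA i
        · intro a b hab
          show Disjoint (A' a) (A' b)
          by_cases ha : a = k
          · rw [ha]; exact hkey b (fun h => hab (ha.trans h.symm))
          · by_cases hb : b = k
            · rw [hb]; exact (hkey a ha).symm
            · exact (hAd a b hab).mono (hsub a ha) (hsub b hb)
        · show I = Finset.univ.biUnion A'
          rw [hIA]
          ext x
          simp only [Finset.mem_biUnion, Finset.mem_univ, true_and]
          constructor
          · rintro ⟨m, hm⟩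
            by_cases hxg : x = g
            · exact ⟨k, by rw [hA'k, hxg]; exact Finset.mem_insert_self _ _⟩
            · by_cases h1 : m = k
              · exact ⟨k, by rw [hA'k]; exact Finset.mem_insert_of_mem (h1 ▸ hm)⟩
              · by_cases h2 : m = l
                · exact ⟨l, by rw [hA'l]; exact Finset.mem_erase.2 ⟨hxg, h2 ▸ hm⟩⟩
                · exact ⟨m, by rw [hA'm m h1 h2]; exact hm⟩
          · rintro ⟨m, hm⟩
            by_cases h1 : m = k
            · rw [h1, hA'k] at hm
              rcases Finset.mem_insert.1 hm with rfl | hm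
              · exact ⟨l, hgl⟩
              · exact ⟨k, hm⟩
            · by_cases h2 : m = l
              · rw [h2, hA'l] at hm
                exact ⟨l, Finset.mem_of_mem_erase hm⟩
              · rw [hA'm m h1 h2] at hm; exact ⟨m, hm⟩
      have hlt : f (A, B) < f (A', B) := by
        have hterm_k : ((A k) ∩ (B k)).card < ((A' k) ∩ (B k)).card := by
          rw [hA'k, Finset.insert_inter_of_mem hgB,
            Finset.card_insert_of_notMem (fun h => hgA (Finset.mem_inter.1 h).1)]
          omega
        have hterm : ∀ m, ((A m) ∩ (B m)).card ≤ ((A' m) ∩ (B m)).card := by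
          intro m
          by_cases h1 : m = k
          · rw [h1]; exact le_of_lt hterm_k
          · by_cases h2 : m = l
            · rw [h2, hA'l]
              have : A l ∩ B l = (A l).erase g ∩ B l := by
                ext x
                simp only [Finset.mem_inter, Finset.mem_erase]
                constructor
                · rintro ⟨h3, h4⟩
                  refine ⟨⟨fun hx => ?_, h3⟩, h4⟩
                  exact Finset.disjoint_left.1 (hBd l k hlk) (hx ▸ h4) hgB
                · rintro ⟨⟨_, h3⟩, h4⟩; exact ⟨h3, h4⟩
              rw [this]
            · rw [hA'm m h1 h2]
        exact Finset.sum_lt_sum (fun m _ => hterm m) ⟨k, Finset.mem_univ _, hterm_k⟩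
      have hle : f (A', B) ≤ f (A, B) := by
        have hpe : (A, B) = p := rfl
        rw [hpe]
        exact hmax (A', B) (Finset.mem_filter.2 ⟨Finset.mem_univ _, hP'⟩)
      omega
    refine ⟨g, Finset.mem_sdiff.2 ⟨hgJ, hgI⟩, ?_⟩
    refine ⟨fun m => if m = k then insert g (A k) else A m, fun i => ?_, ?_⟩
    · by_cases h1 : i = k
      · subst h1; simpa using hgind
      · simpa [h1] using hA i
    · ext x
      simp only [Finset.mem_insert, Finset.mem_biUnion, Finset.mem_univ, true_and]
      constructor
      · rintro (rfl | hx)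
        · exact ⟨k, by simp⟩
        · rw [hIA] at hx
          obtain ⟨m, -, hm⟩ := Finset.mem_biUnion.1 hx
          by_cases h1 : m = k
          · exact ⟨k, by rw [if_pos rfl]; exact Finset.mem_insert_of_mem (h1 ▸ hm)⟩
          · exact ⟨m, by rw [if_neg h1]; exact hm⟩
      · rintro ⟨m, hm⟩
        by_cases h1 : m = k
        · rw [if_pos h1] at hm
          rcases Finset.mem_insert.1 hm with rfl | hm
          · exact Or.inl rfl
          · exact Or.inr (by rw [hIA]; exact Finset.mem_biUnion.2 ⟨k, Finset.mem_univ _, hm⟩)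
        · rw [if_neg h1] at hm
          exact Or.inr (by rw [hIA]; exact Finset.mem_biUnion.2 ⟨m, Finset.mem_univ _, hm⟩)
  exact ⟨⟨UInd, hempty, hsubset, haug⟩, fun S => Iff.rfl⟩
end

section
/- The rank function r̂ of the union of matroids M_1, …, M_n with rank functions v_1, …, v_n satisfies r̂(S) = min over T ⊆ S of ( |S \ T| + Σ_{i=1}^n v_i(T) ) for all S ⊆ E. -/
namespace FinMatroid

variable {E : Type*} [Fintype E] [DecidableEq E] (M : FinMatroid E)

lemma rankSet_nonempty (S : Finset E) :
    {t | ∃ I : Finset E, I ⊆ S ∧ M.Indep I ∧ I.card = t}.Nonempty :=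
  ⟨0, ∅, Finset.empty_subset _, M.empty_indep, Finset.card_empty⟩

lemma rankSet_bdd (S : Finset E) :
    BddAbove {t | ∃ I : Finset E, I ⊆ S ∧ M.Indep I ∧ I.card = t} :=
  ⟨S.card, fun t ⟨I, hIS, _, hc⟩ => hc ▸ Finset.card_le_card hIS⟩

lemma card_le_rank {S I : Finset E} (hIS : I ⊆ S) (hI : M.Indep I) :
    I.card ≤ M.rank S :=
  le_csSup (M.rankSet_bdd S) ⟨I, hIS, hI, rfl⟩

lemma rank_attained (S : Finset E) :
    ∃ I : Finset E, I ⊆ S ∧ M.Indep I ∧ I.card = M.rank S :=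
  Nat.sSup_mem (M.rankSet_nonempty S) (M.rankSet_bdd S)

lemma rank_le (S : Finset E) {k : ℕ}
    (h : ∀ I : Finset E, I ⊆ S → M.Indep I → I.card ≤ k) : M.rank S ≤ k := by
  obtain ⟨I, hIS, hI, hc⟩ := M.rank_attained S
  exact hc ▸ h I hIS hI

lemma rank_le_card (S : Finset E) : M.rank S ≤ S.card :=
  M.rank_le S fun I hIS _ => Finset.card_le_card hIS

lemma rank_mono {S T : Finset E} (h : S ⊆ T) : M.rank S ≤ M.rank T :=
  M.rank_le S fun I hIS hI => M.card_le_rank (hIS.trans h) hI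

lemma rank_empty : M.rank ∅ = 0 :=
  Nat.le_zero.mp (M.rank_le_card ∅)

/-- any independent subset of `S` extends to one of full rank. -/
lemma exists_basis_ext {I S : Finset E} (hIS : I ⊆ S) (hI : M.Indep I) :
    ∃ B : Finset E, I ⊆ B ∧ B ⊆ S ∧ M.Indep B ∧ B.card = M.rank S := by
  classical
  set C := S.powerset.filter (fun B => I ⊆ B ∧ M.Indep B) with hC
  have hne : C.Nonempty := ⟨I, by simp [hC, hIS, hI]⟩
  obtain ⟨B, hBC, hBmax⟩ := C.exists_max_image Finset.card hne
  simp only [hC, Finset.mem_filter, Finset.mem_powerset] at hBC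
  obtain ⟨hBS, hIB, hB⟩ := hBC
  refine ⟨B, hIB, hBS, hB, le_antisymm (M.card_le_rank hBS hB) ?_⟩
  by_contra h
  push_neg at h
  obtain ⟨B₀, hB₀S, hB₀, hB₀c⟩ := M.rank_attained S
  obtain ⟨g, hg, hgB⟩ := M.aug hB hB₀ (hB₀c ▸ h)
  have hgmem : insert g B ∈ C := by
    simp only [hC, Finset.mem_filter, Finset.mem_powerset]
    exact ⟨Finset.insert_subset (hB₀S (Finset.mem_sdiff.mp hg).1) hBS,
      hIB.trans (Finset.subset_insert _ _), hgB⟩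
  have := hBmax _ hgmem
  rw [Finset.card_insert_of_notMem (Finset.mem_sdiff.mp hg).2] at this
  omega

lemma rank_submod (A B : Finset E) :
    M.rank (A ∪ B) + M.rank (A ∩ B) ≤ M.rank A + M.rank B := by
  obtain ⟨I, hIs, hI, hIc⟩ := M.rank_attained (A ∩ B)
  obtain ⟨J, hIJ, hJs, hJ, hJc⟩ := M.exists_basis_ext
    (hIs.trans Finset.inter_subset_union) hI
  have h1 : (J ∩ A).card ≤ M.rank A :=
    M.card_le_rank Finset.inter_subset_right (M.subset_indep hJ Finset.inter_subset_left)
  have h2 : (J \ A ∪ I).card ≤ M.rank B := by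
    refine M.card_le_rank ?_ (M.subset_indep hJ ?_)
    · refine Finset.union_subset ?_ (hIs.trans Finset.inter_subset_right)
      intro x hx
      rcases Finset.mem_sdiff.mp hx with ⟨hxJ, hxA⟩
      rcases Finset.mem_union.mp (hJs hxJ) with h | h
      · exact absurd h hxA
      · exact h
    · exact Finset.union_subset Finset.sdiff_subset hIJ
  have hdisj : Disjoint (J \ A) I := by
    refine Finset.disjoint_left.mpr fun x hx hxI => ?_
    exact (Finset.mem_sdiff.mp hx).2 (Finset.mem_inter.mp (hIs hxI)).1
  rw [Finset.card_union_of_disjoint hdisj] at h2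
  have hJsplit : (J ∩ A).card + (J \ A).card = J.card := by
    rw [Finset.card_inter_add_card_sdiff]
  omega

lemma rank_insert_le (e : E) (S : Finset E) :
    M.rank (insert e S) ≤ M.rank S + 1 := by
  refine M.rank_le _ fun I hIS hI => ?_
  have h1 : I.erase e ⊆ S := by
    intro x hx
    rcases Finset.mem_erase.mp hx with ⟨hxe, hxI⟩
    rcases Finset.mem_insert.mp (hIS hxI) with h | h
    · exact absurd h hxe
    · exact h
  have := M.card_le_rank h1 (M.subset_indep hI (Finset.erase_subset _ _))
  have := Finset.pred_card_le_card_erase (a := e) (s := I)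
  omega

lemma loop_rank_insert {e : E} (he : M.rank {e} = 0) (T : Finset E) :
    M.rank (insert e T) = M.rank T := by
  refine le_antisymm (M.rank_le _ fun I hIS hI => ?_) (M.rank_mono (Finset.subset_insert _ _))
  have heI : e ∉ I := by
    intro heI
    have : ({e} : Finset E).card ≤ M.rank {e} :=
      M.card_le_rank (le_refl _) (M.subset_indep hI (Finset.singleton_subset_iff.mpr heI))
    simp [he] at this
  refine M.card_le_rank (fun x hx => ?_) hI
  rcases Finset.mem_insert.mp (hIS hx) with h | h
  · exact absurd (h ▸ hx) heI
  · exact h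

lemma nonloop_of_pos {e : E} (he : 0 < M.rank {e}) : M.Indep {e} := by
  obtain ⟨I, hIS, hI, hIc⟩ := M.rank_attained {e}
  have : I = {e} := by
    have : I.card = 1 := le_antisymm (by simpa using Finset.card_le_card hIS) (by omega)
    obtain ⟨a, ha⟩ := Finset.card_eq_one.mp this
    rw [ha]; rw [ha] at hIS
    simpa using hIS
  exact this ▸ hI

/-- contraction by a non-loop element -/
def contract (e : E) (he : M.Indep {e}) : FinMatroid E where
  Indep I := e ∉ I ∧ M.Indep (insert e I)
  empty_indep := ⟨Finset.notMem_empty e, by simpa using he⟩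
  subset_indep := fun I J hI hJI =>
    ⟨fun h => hI.1 (hJI h), M.subset_indep hI.2 (Finset.insert_subset_insert _ hJI)⟩
  aug := by
    rintro I J ⟨heI, hI⟩ ⟨heJ, hJ⟩ hcard
    have hc : (insert e I).card < (insert e J).card := by
      rw [Finset.card_insert_of_notMem heI, Finset.card_insert_of_notMem heJ]; omega
    obtain ⟨g, hg, hgind⟩ := M.aug hI hJ hc
    rcases Finset.mem_sdiff.mp hg with ⟨hgJ, hgI⟩
    have hge : g ≠ e := fun h => hgI (h ▸ Finset.mem_insert_self e I)
    refine ⟨g, Finset.mem_sdiff.mpr ⟨?_, fun h => hgI (Finset.mem_insert_of_mem h)⟩, ?_, ?_⟩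
    · rcases Finset.mem_insert.mp hgJ with h | h
      · exact absurd h hge
      · exact h
    · simp only [Finset.mem_insert, not_or]
      exact ⟨fun h => hge h.symm, heI⟩
    · rw [Finset.insert_comm]; exact hgind

end FinMatroid

namespace FinMatroid

variable {E : Type*} [Fintype E] [DecidableEq E] (M : FinMatroid E)

lemma contract_rank (e : E) (he : M.Indep {e}) {T : Finset E} (heT : e ∉ T) :
    (M.contract e he).rank T + 1 = M.rank (insert e T) := by
  refine le_antisymm ?_ ?_
  · obtain ⟨I, hIT, hI, hIc⟩ := (M.contract e he).rank_attained T
    obtain ⟨heI, hIe⟩ := hI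
    have h1 : insert e I ⊆ insert e T := Finset.insert_subset_insert _ hIT
    have := M.card_le_rank h1 hIe
    rw [Finset.card_insert_of_notMem heI] at this
    omega
  · obtain ⟨B, heB, hBT, hB, hBc⟩ := M.exists_basis_ext
      (Finset.singleton_subset_iff.mpr (Finset.mem_insert_self e T)) he
    have heB' : e ∈ B := heB (Finset.mem_singleton_self e)
    have hind : (M.contract e he).Indep (B.erase e) := by
      refine ⟨Finset.notMem_erase _ _, ?_⟩
      rw [Finset.insert_erase heB']
      exact hB
    have hsub : B.erase e ⊆ T := by
      intro x hx
      rcases Finset.mem_erase.mp hx with ⟨hxe, hxB⟩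
      rcases Finset.mem_insert.mp (hBT hxB) with h | h
      · exact absurd h hxe
      · exact h
    have := (M.contract e he).card_le_rank hsub hind
    rw [Finset.card_erase_of_mem heB'] at this
    have hB1 : 1 ≤ B.card := Finset.card_pos.mpr ⟨e, heB'⟩
    omega

theorem exists_common_indep (M₁ M₂ : FinMatroid E) (S : Finset E) (k : ℕ)
    (hk : ∀ T ⊆ S, k ≤ M₁.rank T + M₂.rank (S \ T)) :
    ∃ I : Finset E, I ⊆ S ∧ M₁.Indep I ∧ M₂.Indep I ∧ k ≤ I.card := by
  classical
  induction S using Finset.strongInduction generalizing M₁ M₂ k with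
  | _ S ih =>
  rcases S.eq_empty_or_nonempty with rfl | ⟨e, heS⟩
  · refine ⟨∅, le_refl _, M₁.empty_indep, M₂.empty_indep, ?_⟩
    have := hk ∅ (le_refl _)
    simpa [rank_empty] using this
  · set S' := S.erase e with hS'
    have hS'sub : S' ⊂ S := Finset.erase_ssubset heS
    by_cases hdel : ∀ T ⊆ S', k ≤ M₁.rank T + M₂.rank (S' \ T)
    · obtain ⟨I, hIS, h1, h2, hc⟩ := ih S' hS'sub M₁ M₂ k hdel
      exact ⟨I, hIS.trans (Finset.erase_subset _ _), h1, h2, hc⟩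
    push_neg at hdel
    obtain ⟨T₀, hT₀, hT₀lt⟩ := hdel
    have heT₀ : e ∉ T₀ := fun h => (Finset.notMem_erase e S) (hT₀ h)
    -- e is a nonloop in both matroids
    have hne1 : M₁.Indep {e} := by
      refine M₁.nonloop_of_pos ?_
      by_contra h
      push_neg at h
      have hr0 : M₁.rank {e} = 0 := Nat.le_zero.mp h
      have hsub : insert e T₀ ⊆ S :=
        Finset.insert_subset heS (hT₀.trans (Finset.erase_subset _ _))
      have := hk (insert e T₀) hsub
      rw [M₁.loop_rank_insert hr0] at this
      have hds : S \ insert e T₀ = S' \ T₀ := by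
        ext x
        simp only [Finset.mem_sdiff, Finset.mem_insert, hS', Finset.mem_erase, not_or]
        tauto
      rw [hds] at this
      omega
    have hne2 : M₂.Indep {e} := by
      refine M₂.nonloop_of_pos ?_
      by_contra h
      push_neg at h
      have hr0 : M₂.rank {e} = 0 := Nat.le_zero.mp h
      have := hk T₀ (hT₀.trans (Finset.erase_subset _ _))
      have hds : S \ T₀ = insert e (S' \ T₀) := by
        ext x
        simp only [Finset.mem_sdiff, Finset.mem_insert, hS', Finset.mem_erase]
        constructor
        · rintro ⟨hxS, hxT⟩
          by_cases hxe : x = e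
          · exact Or.inl hxe
          · exact Or.inr ⟨⟨hxe, hxS⟩, hxT⟩
        · rintro (rfl | ⟨⟨_, hxS⟩, hxT⟩)
          · exact ⟨heS, heT₀⟩
          · exact ⟨hxS, hxT⟩
      rw [hds, M₂.loop_rank_insert hr0] at this
      omega
    set N₁ := M₁.contract e hne1
    set N₂ := M₂.contract e hne2
    by_cases hcon : ∀ T ⊆ S', k - 1 ≤ N₁.rank T + N₂.rank (S' \ T)
    · obtain ⟨I, hIS, h1, h2, hc⟩ := ih S' hS'sub N₁ N₂ (k - 1) hcon
      refine ⟨insert e I, Finset.insert_subset heS (hIS.trans (Finset.erase_subset _ _)),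
        h1.2, h2.2, ?_⟩
      rw [Finset.card_insert_of_notMem h1.1]
      omega
    push_neg at hcon
    obtain ⟨T₁, hT₁, hT₁lt⟩ := hcon
    exfalso
    have heT₁ : e ∉ T₁ := fun h => (Finset.notMem_erase e S) (hT₁ h)
    have heST₁ : e ∉ S' \ T₁ := fun h => (Finset.notMem_erase e S) (Finset.mem_sdiff.mp h).1
    have hr1 : N₁.rank T₁ + 1 = M₁.rank (insert e T₁) := M₁.contract_rank e hne1 heT₁
    have hr2 : N₂.rank (S' \ T₁) + 1 = M₂.rank (insert e (S' \ T₁)) :=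
      M₂.contract_rank e hne2 heST₁
    -- key: r₁(insert e T₁) + r₂(insert e (S'\T₁)) ≤ k
    have hkey : M₁.rank (insert e T₁) + M₂.rank (insert e (S' \ T₁)) ≤ k := by omega
    -- submodularity
    have hsub1 : M₁.rank (T₀ ∪ insert e T₁) + M₁.rank (T₀ ∩ insert e T₁)
        ≤ M₁.rank T₀ + M₁.rank (insert e T₁) := M₁.rank_submod _ _
    have hsub2 : M₂.rank ((S' \ T₀) ∪ insert e (S' \ T₁)) + M₂.rank ((S' \ T₀) ∩ insert e (S' \ T₁))
        ≤ M₂.rank (S' \ T₀) + M₂.rank (insert e (S' \ T₁)) := M₂.rank_submod _ _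
    -- identities
    have id1 : T₀ ∪ insert e T₁ = insert e (T₀ ∪ T₁) := by
      ext x; simp only [Finset.mem_union, Finset.mem_insert]; tauto
    have id2 : T₀ ∩ insert e T₁ = T₀ ∩ T₁ := by
      ext x
      simp only [Finset.mem_inter, Finset.mem_insert]
      constructor
      · rintro ⟨hx, rfl | hx'⟩
        · exact absurd hx heT₀
        · exact ⟨hx, hx'⟩
      · tauto
    have id3 : (S' \ T₀) ∪ insert e (S' \ T₁) = S \ (T₀ ∩ T₁) := by
      ext x
      simp only [Finset.mem_union, Finset.mem_insert, Finset.mem_sdiff, hS',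
        Finset.mem_erase, Finset.mem_inter, not_and]
      constructor
      · rintro (⟨⟨hxe, hxS⟩, hxT⟩ | rfl | ⟨⟨hxe, hxS⟩, hxT⟩)
        · exact ⟨hxS, fun h => absurd h hxT⟩
        · exact ⟨heS, fun h => absurd h heT₀⟩
        · exact ⟨hxS, fun _ => fun h => absurd h hxT⟩
      · rintro ⟨hxS, hxT⟩
        by_cases hxe : x = e
        · exact Or.inr (Or.inl hxe)
        · by_cases hx0 : x ∈ T₀
          · exact Or.inr (Or.inr ⟨⟨hxe, hxS⟩, hxT hx0⟩)
          · exact Or.inl ⟨⟨hxe, hxS⟩, hx0⟩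
    have id4 : (S' \ T₀) ∩ insert e (S' \ T₁) = S \ insert e (T₀ ∪ T₁) := by
      ext x
      simp only [Finset.mem_inter, Finset.mem_insert, Finset.mem_sdiff, hS',
        Finset.mem_erase, Finset.mem_union, not_or]
      constructor
      · rintro ⟨⟨⟨hxe, hxS⟩, hxT0⟩, h⟩
        rcases h with rfl | ⟨_, hxT1⟩
        · exact absurd rfl hxe
        · exact ⟨hxS, hxe, hxT0, hxT1⟩
      · rintro ⟨hxS, hxe, hxT0, hxT1⟩
        exact ⟨⟨⟨hxe, hxS⟩, hxT0⟩, Or.inr ⟨⟨hxe, hxS⟩, hxT1⟩⟩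
    rw [id1, id2] at hsub1
    rw [id3, id4] at hsub2
    have hA : k ≤ M₁.rank (insert e (T₀ ∪ T₁)) + M₂.rank (S \ insert e (T₀ ∪ T₁)) := by
      refine hk _ ?_
      refine Finset.insert_subset heS (Finset.union_subset ?_ ?_) <;>
        exact (by assumption : _ ⊆ S').trans (Finset.erase_subset _ _)
    have hB : k ≤ M₁.rank (T₀ ∩ T₁) + M₂.rank (S \ (T₀ ∩ T₁)) :=
      hk _ ((Finset.inter_subset_left.trans hT₀).trans (Finset.erase_subset _ _))
    omega

end FinMatroid

section Reduction

variable {E : Type*} [Fintype E] [DecidableEq E] {n : ℕ}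

open Finset

/-- the `i`-th fiber of a finset of pairs -/
def fiber (I : Finset (E × Fin n)) (i : Fin n) : Finset E :=
  (I.filter (fun p => p.2 = i)).image Prod.fst

lemma mem_fiber {I : Finset (E × Fin n)} {i : Fin n} {a : E} :
    a ∈ fiber I i ↔ (a, i) ∈ I := by
  simp only [fiber, mem_image, mem_filter, Prod.exists]
  constructor
  · rintro ⟨x, y, ⟨hxy, rfl⟩, rfl⟩
    exact hxy
  · intro h
    exact ⟨a, i, ⟨h, rfl⟩, rfl⟩

lemma fiber_mono {I J : Finset (E × Fin n)} (h : I ⊆ J) (i : Fin n) :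
    fiber I i ⊆ fiber J i := fun a ha => mem_fiber.mpr (h (mem_fiber.mp ha))

lemma card_fiber_eq (I : Finset (E × Fin n)) (i : Fin n) :
    (fiber I i).card = (I.filter (fun p => p.2 = i)).card := by
  refine card_image_of_injOn ?_
  rintro ⟨a, j⟩ ha ⟨b, l⟩ hb hab
  simp only [mem_coe, mem_filter] at ha hb
  simp only at hab
  rw [Prod.mk.injEq]
  exact ⟨hab, ha.2.trans hb.2.symm⟩

lemma card_eq_sum_fibers (I : Finset (E × Fin n)) :
    I.card = ∑ i, (fiber I i).card := by
  simp_rw [card_fiber_eq]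
  exact card_eq_sum_card_fiberwise (fun x _ => mem_univ x.2)

/-- Direct sum of the matroids `M i`, living on `E × Fin n`. -/
def sumMatroid (M : Fin n → FinMatroid E) : FinMatroid (E × Fin n) where
  Indep I := ∀ i, (M i).Indep (fiber I i)
  empty_indep := by
    intro i
    have : fiber (∅ : Finset (E × Fin n)) i = ∅ := by
      ext a; simp [mem_fiber]
    rw [this]
    exact (M i).empty_indep
  subset_indep := fun I J hI hJI i => (M i).subset_indep (hI i) (fiber_mono hJI i)
  aug := by
    intro I J hI hJ hcard
    rw [card_eq_sum_fibers, card_eq_sum_fibers] at hcard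
    obtain ⟨i, -, hi⟩ := Finset.exists_lt_of_sum_lt hcard
    obtain ⟨g, hg, hgind⟩ := (M i).aug (hI i) (hJ i) hi
    rcases mem_sdiff.mp hg with ⟨hgJ, hgI⟩
    refine ⟨(g, i), mem_sdiff.mpr ⟨mem_fiber.mp hgJ, fun h => hgI (mem_fiber.mpr h)⟩, ?_⟩
    intro j
    by_cases hj : j = i
    · subst hj
      have : fiber (insert (g, j) I) j = insert g (fiber I j) := by
        ext a
        simp only [mem_fiber, mem_insert, Prod.mk.injEq]
        tauto
      rw [this]
      exact hgind
    · have : fiber (insert (g, i) I) j = fiber I j := by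
        ext a
        simp only [mem_fiber, mem_insert, Prod.mk.injEq]
        constructor
        · rintro (⟨rfl, rfl⟩ | h)
          · exact absurd rfl hj
          · exact h
        · tauto
      rw [this]
      exact hI j

lemma sumMatroid_rank (M : Fin n → FinMatroid E) (T : Finset (E × Fin n)) :
    (sumMatroid M).rank T = ∑ i, (M i).rank (fiber T i) := by
  refine le_antisymm ((sumMatroid M).rank_le _ fun I hIT hI => ?_) ?_
  · rw [card_eq_sum_fibers]
    exact Finset.sum_le_sum fun i _ => (M i).card_le_rank (fiber_mono hIT i) (hI i)
  · classical
    have h : ∀ i : Fin n, ∃ B : Finset E, B ⊆ fiber T i ∧ (M i).Indep B ∧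
        B.card = (M i).rank (fiber T i) := fun i => (M i).rank_attained _
    choose B hBsub hBind hBcard using h
    set I : Finset (E × Fin n) := univ.biUnion (fun i => (B i).image (fun a => (a, i))) with hIdef
    have hfib : ∀ i, fiber I i = B i := by
      intro i
      ext a
      simp only [mem_fiber, hIdef, mem_biUnion, mem_univ, true_and, mem_image,
        Prod.mk.injEq]
      constructor
      · rintro ⟨j, b, hb, rfl, rfl⟩
        exact hb
      · intro h
        exact ⟨i, a, h, rfl, rfl⟩
    have hIT : I ⊆ T := by
      intro p hp
      simp only [hIdef, mem_biUnion, mem_univ, true_and, mem_image] at hp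
      obtain ⟨j, b, hb, rfl⟩ := hp
      exact mem_fiber.mp (hBsub j hb)
    have hind : (sumMatroid M).Indep I := fun i => (hfib i) ▸ hBind i
    have := (sumMatroid M).card_le_rank hIT hind
    rw [card_eq_sum_fibers] at this
    calc ∑ i, (M i).rank (fiber T i) = ∑ i, (fiber I i).card := by
          refine Finset.sum_congr rfl fun i _ => ?_
          rw [hfib i, hBcard i]
        _ ≤ _ := this

/-- Partition matroid: at most one element per `E`-fiber. -/
def partMatroid (E : Type*) [Fintype E] [DecidableEq E] (n : ℕ) :
    FinMatroid (E × Fin n) where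
  Indep I := Set.InjOn (fun p : E × Fin n => p.1) ↑I
  empty_indep := by simp [Set.InjOn]
  subset_indep := fun I J hI hJI => hI.mono (by exact_mod_cast hJI)
  aug := by
    intro I J hI hJ hcard
    have hIc : (I.image Prod.fst).card = I.card := card_image_of_injOn hI
    have hJc : (J.image Prod.fst).card = J.card := card_image_of_injOn hJ
    have : ¬ (J.image Prod.fst ⊆ I.image Prod.fst) := by
      intro h
      have := card_le_card h
      omega
    obtain ⟨a, haJ, haI⟩ := not_subset.mp this
    obtain ⟨p, hpJ, hpa⟩ := mem_image.mp haJ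
    have hpI : p ∉ I := fun h => haI (mem_image.mpr ⟨p, h, hpa⟩)
    refine ⟨p, mem_sdiff.mpr ⟨hpJ, hpI⟩, ?_⟩
    intro q hq r hr hqr
    simp only [coe_insert, Set.mem_insert_iff, mem_coe] at hq hr
    rcases hq with rfl | hq <;> rcases hr with rfl | hr
    · rfl
    · exact absurd (mem_image.mpr ⟨r, hr, (hqr.symm.trans hpa)⟩) haI
    · exact absurd (mem_image.mpr ⟨q, hq, (hqr.trans hpa)⟩) haI
    · exact hI hq hr hqr

lemma partMatroid_rank (U : Finset (E × Fin n)) :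
    (partMatroid E n).rank U = (U.image Prod.fst).card := by
  classical
  refine le_antisymm ((partMatroid E n).rank_le _ fun I hIU hI => ?_) ?_
  · rw [← card_image_of_injOn hI]
    exact card_le_card (image_subset_image hIU)
  · have hch : ∀ a : {x // x ∈ U.image Prod.fst}, ∃ p : E × Fin n, p ∈ U ∧ p.1 = a.1 := by
      rintro ⟨a, ha⟩
      obtain ⟨p, hp, hpa⟩ := mem_image.mp ha
      exact ⟨p, hp, hpa⟩
    choose f hf1 hf2 using hch
    set I : Finset (E × Fin n) := (U.image Prod.fst).attach.image f with hIdef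
    have hIU : I ⊆ U := by
      intro p hp
      rw [hIdef, mem_image] at hp
      obtain ⟨a, _, rfl⟩ := hp
      exact hf1 a
    have hIind : (partMatroid E n).Indep I := by
      intro p hp q hq hpq
      simp only [hIdef, coe_image, Set.mem_image, mem_coe, mem_attach, true_and] at hp hq
      obtain ⟨a, -, rfl⟩ := hp
      obtain ⟨b, -, rfl⟩ := hq
      have : a = b := Subtype.ext (by rw [← hf2 a, ← hf2 b]; exact hpq)
      rw [this]
    have hIcard : I.card = (U.image Prod.fst).card := by
      have hinj : Set.InjOn f ↑(U.image Prod.fst).attach := by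
        intro a _ b _ hab
        exact Subtype.ext (by rw [← hf2 a, ← hf2 b, hab])
      rw [hIdef, card_image_of_injOn hinj, card_attach]
    exact hIcard ▸ (partMatroid E n).card_le_rank hIU hIind

end Reduction

open Finset in
/-- Matroid union theorem: the rank of the union matroid satisfies the convolution
formula, a minimum over subsets `T` of `S` of `|S minus T| + Σ_i v_i(T)`. -/
theorem stmt4 {E : Type*} [Fintype E] [DecidableEq E] {n : ℕ}
    (M : Fin n → FinMatroid E) (Mu : FinMatroid E)
    (hMu : ∀ S : Finset E, Mu.Indep S ↔ ∃ I : Fin n → Finset E,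
      (∀ i, (M i).Indep (I i)) ∧ S = Finset.univ.biUnion I) :
    ∀ S : Finset E,
      Mu.rank S = S.powerset.inf' ⟨∅, Finset.empty_mem_powerset S⟩
        (fun T => (S \ T).card + ∑ i, (M i).rank T) := by
  intro S
  classical
  refine le_antisymm ?_ ?_
  · -- easy direction
    refine Mu.rank_le S fun J hJS hJ => ?_
    refine Finset.le_inf' _ _ fun T hT => ?_
    rw [mem_powerset] at hT
    obtain ⟨I, hIind, hJdef⟩ := (hMu _).mp hJ
    have hsplit : (J \ T).card + (J ∩ T).card = J.card := card_sdiff_add_card_inter J T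
    have h1 : (J \ T).card ≤ (S \ T).card := card_le_card (sdiff_subset_sdiff hJS le_rfl)
    have h2 : (J ∩ T).card ≤ ∑ i, (M i).rank T := by
      have hJT : J ∩ T = univ.biUnion (fun i => I i ∩ T) := by
        rw [hJdef]
        ext a
        simp only [mem_inter, mem_biUnion, mem_univ, true_and]
        tauto
      rw [hJT]
      calc (univ.biUnion (fun i => I i ∩ T)).card ≤ ∑ i, (I i ∩ T).card :=
            card_biUnion_le
        _ ≤ ∑ i, (M i).rank T := Finset.sum_le_sum fun i _ =>
            (M i).card_le_rank inter_subset_right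
              ((M i).subset_indep (hIind i) inter_subset_left)
    omega
  · -- hard direction
    rcases Nat.eq_zero_or_pos n with rfl | hn
    · calc S.powerset.inf' _ _ ≤ (S \ S).card + ∑ i : Fin 0, (M i).rank S :=
            inf'_le _ (mem_powerset.mpr subset_rfl)
        _ = 0 := by simp
        _ ≤ Mu.rank S := Nat.zero_le _
    · haveI : Nonempty (Fin n) := ⟨⟨0, hn⟩⟩
      set k := S.powerset.inf' ⟨∅, Finset.empty_mem_powerset S⟩
        (fun T => (S \ T).card + ∑ i, (M i).rank T) with hkdef
      have hk : ∀ T' ⊆ S ×ˢ (univ : Finset (Fin n)),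
          k ≤ (sumMatroid M).rank T' + (partMatroid E n).rank ((S ×ˢ univ) \ T') := by
        intro T' hT'
        rw [sumMatroid_rank, partMatroid_rank]
        set T := S.filter (fun a => ∀ i, (a, i) ∈ T') with hTdef
        have hTS : T ⊆ S := filter_subset _ _
        have h1 : ∑ i, (M i).rank T ≤ ∑ i, (M i).rank (fiber T' i) := by
          refine Finset.sum_le_sum fun i _ => (M i).rank_mono fun a ha => ?_
          exact mem_fiber.mpr ((mem_filter.mp ha).2 i)
        have h2 : (S \ T).card ≤ (((S ×ˢ univ) \ T').image Prod.fst).card := by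
          refine card_le_card fun a ha => ?_
          rcases mem_sdiff.mp ha with ⟨haS, haT⟩
          rw [hTdef, mem_filter, not_and] at haT
          push_neg at haT
          obtain ⟨i, hi⟩ := haT haS
          exact mem_image.mpr ⟨(a, i),
            mem_sdiff.mpr ⟨mem_product.mpr ⟨haS, mem_univ i⟩, hi⟩, rfl⟩
        have h3 : k ≤ (S \ T).card + ∑ i, (M i).rank T :=
          inf'_le _ (mem_powerset.mpr hTS)
        omega
      obtain ⟨I, hIsub, hI1, hI2, hIc⟩ :=
        FinMatroid.exists_common_indep (sumMatroid M) (partMatroid E n) (S ×ˢ univ) k hk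
      set J := I.image Prod.fst with hJdef
      have hJS : J ⊆ S := by
        intro a ha
        obtain ⟨p, hp, rfl⟩ := mem_image.mp ha
        exact (mem_product.mp (hIsub hp)).1
      have hJcard : J.card = I.card := card_image_of_injOn hI2
      have hJind : Mu.Indep J := by
        refine (hMu J).mpr ⟨fun i => fiber I i, fun i => hI1 i, ?_⟩
        ext a
        simp only [hJdef, mem_image, mem_biUnion, mem_univ, true_and]
        constructor
        · rintro ⟨⟨b, i⟩, hp, rfl⟩
          exact ⟨i, mem_fiber.mpr hp⟩
        · rintro ⟨i, hi⟩
          exact ⟨(a, i), mem_fiber.mp hi, rfl⟩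
      calc k ≤ I.card := hIc
        _ = J.card := hJcard.symm
        _ ≤ Mu.rank S := Mu.card_le_rank hJS hJind
end

section
/- Under monotone submodular valuations, every (partial) allocation satisfying the pairwise maximin share guarantee is envy-free up to one good (EF1). -/
/-- Maximin share `μ(k, S)` for a real-valued valuation. -/
noncomputable def mmsR {E : Type*} [Fintype E] [DecidableEq E]
    (v : Finset E → ℝ) (k : ℕ) (S : Finset E) : ℝ :=
  sSup {t | ∃ Y : Fin k → Finset E,
    (∀ a b, a ≠ b → Disjoint (Y a) (Y b)) ∧ Finset.univ.biUnion Y = S ∧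
    ∀ j, t ≤ v (Y j)}

/-- Under monotone submodular valuations, every (partial) allocation satisfying the
pairwise maximin share guarantee is EF1. -/
theorem stmt6 {n m : ℕ} (v : Fin n → Finset (Fin m) → ℝ)
    (hnn : ∀ i S, 0 ≤ v i S) (h0 : ∀ i, v i ∅ = 0)
    (hmono : ∀ i ⦃S T : Finset (Fin m)⦄, S ⊆ T → v i S ≤ v i T)
    (hsub : ∀ i (S T : Finset (Fin m)), v i (S ∪ T) + v i (S ∩ T) ≤ v i S + v i T)
    (P : Fin n → Finset (Fin m))
    (hdisj : ∀ a b, a ≠ b → Disjoint (P a) (P b))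
    (hpmms : ∀ i j, mmsR (v i) 2 (P i ∪ P j) ≤ v i (P i)) :
    ∀ i j, (P j).Nonempty → ∃ g ∈ P j, v i ((P j).erase g) ≤ v i (P i) := by
  intro i j hne
  by_cases hij : i = j
  · subst hij
    obtain ⟨g, hg⟩ := hne
    exact ⟨g, hg, hmono i (Finset.erase_subset g (P i))⟩
  · have hdij : Disjoint (P i) (P j) := hdisj i j hij
    by_cases hcase : ∃ g ∈ P j, v i (P i) < v i (insert g (P i))
    · obtain ⟨g, hgj, hglt⟩ := hcase
      set A := (P j).erase g with hA
      set B := insert g (P i) with hB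
      have hgPi : g ∉ P i := Finset.disjoint_right.mp hdij hgj
      have hYdisj : Disjoint A B := by
        rw [hA, hB, Finset.disjoint_insert_right]
        exact ⟨Finset.notMem_erase g (P j),
          (hdij.symm.mono_left (Finset.erase_subset _ _))⟩
      have hYunion : A ∪ B = P i ∪ P j := by
        ext x
        simp only [hA, hB, Finset.mem_union, Finset.mem_erase, Finset.mem_insert]
        constructor
        · rintro (⟨_, hx⟩ | (rfl | hx)) <;> tauto
        · rintro (hx | hx)
          · tauto
          · by_cases hxg : x = g <;> tauto
      have hmem : min (v i A) (v i B) ∈ {t | ∃ Y : Fin 2 → Finset (Fin m),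
          (∀ a b, a ≠ b → Disjoint (Y a) (Y b)) ∧ Finset.univ.biUnion Y = P i ∪ P j ∧
          ∀ k, t ≤ v i (Y k)} := by
        refine ⟨![A, B], ?_, ?_, ?_⟩
        · intro a b hab
          fin_cases a <;> fin_cases b <;> simp_all [hYdisj, hYdisj.symm] <;> exact hYdisj.symm
        · rw [← hYunion]
          ext x
          simp [Fin.exists_fin_two]
        · intro k
          fin_cases k <;> simp [min_le_left, min_le_right]
      have hbdd : BddAbove {t | ∃ Y : Fin 2 → Finset (Fin m),
          (∀ a b, a ≠ b → Disjoint (Y a) (Y b)) ∧ Finset.univ.biUnion Y = P i ∪ P j ∧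
          ∀ k, t ≤ v i (Y k)} := by
        refine ⟨v i Finset.univ, ?_⟩
        rintro t ⟨Y, _, _, hY⟩
        exact (hY 0).trans (hmono i (Finset.subset_univ _))
      have hpm := hpmms i j
      unfold mmsR at hpm
      have hle : min (v i A) (v i B) ≤ v i (P i) :=
        (le_csSup hbdd hmem).trans hpm
      refine ⟨g, hgj, ?_⟩
      rcases min_cases (v i A) (v i B) with ⟨h1, _⟩ | ⟨h1, _⟩
      · rw [h1] at hle; exact hle
      · rw [h1] at hle; exact absurd hle (not_le.mpr hglt)
    · push_neg at hcase
      have key : ∀ T : Finset (Fin m), T ⊆ P j → v i (P i ∪ T) ≤ v i (P i) := by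
        intro T
        induction T using Finset.induction_on with
        | empty => intro _; simp
        | @insert g T hgT ih =>
          intro hsub'
          have hgj : g ∈ P j := hsub' (Finset.mem_insert_self g T)
          have hTj : T ⊆ P j := (Finset.subset_insert g T).trans hsub'
          have hgPi : g ∉ P i := Finset.disjoint_right.mp hdij hgj
          have hs := hsub i (P i ∪ T) (insert g (P i))
          have hu : (P i ∪ T) ∪ insert g (P i) = P i ∪ insert g T := by
            ext x
            simp only [Finset.mem_union, Finset.mem_insert]
            tauto
          have hi : (P i ∪ T) ∩ insert g (P i) = P i := by
            ext x
            simp only [Finset.mem_inter, Finset.mem_union, Finset.mem_insert]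
            constructor
            · rintro ⟨hx1, (rfl | hx2)⟩
              · rcases hx1 with hx | hx
                · exact hx
                · exact absurd hx hgT
              · exact hx2
            · intro hx; tauto
          rw [hu, hi] at hs
          have := ih hTj
          have := hcase g hgj
          linarith
      obtain ⟨g, hg⟩ := hne
      refine ⟨g, hg, ?_⟩
      have h1 : v i ((P j).erase g) ≤ v i (P i ∪ P j) :=
        hmono i ((Finset.erase_subset _ _).trans Finset.subset_union_right)
      exact h1.trans (key (P j) (subset_refl _))
end

section
/- Let v be a monotone submodular function with v(∅)=0 and let A, B be disjoint sets of goods. If agent valuation v envies B from A in a way that is not EF1 (i.e., v(A) < v(B \ {g}) for every g ∈ B), then there exists a good g' ∈ B such that v(A) < v(A ∪ {g'}), and consequently v(A) < min{v(A ∪ {g'}), v(B \ {g'})} ≤ μ(2, A ∪ B). -/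
/-- If a monotone submodular valuation envies `B` from `A` in a way violating EF1,
then some good `g'` of `B` strictly improves `A`, and hence
`v(A) < min (v (A ∪ {g'})) (v (B minus g')) ≤ μ(2, A ∪ B)`. -/
theorem stmt7 {E : Type*} [Fintype E] [DecidableEq E] (v : Finset E → ℝ)
    (hnn : ∀ S, 0 ≤ v S) (h0 : v ∅ = 0)
    (hmono : ∀ ⦃S T : Finset E⦄, S ⊆ T → v S ≤ v T)
    (hsub : ∀ S T : Finset E, v (S ∪ T) + v (S ∩ T) ≤ v S + v T)
    (A B : Finset E) (hdisj : Disjoint A B) (hB : B.Nonempty)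
    (henvy : ∀ g ∈ B, v A < v (B.erase g)) :
    ∃ g' ∈ B, v A < v (insert g' A) ∧
      v A < min (v (insert g' A)) (v (B.erase g')) ∧
      min (v (insert g' A)) (v (B.erase g')) ≤ mmsR v 2 (A ∪ B) := by
  -- Step 1: find g' ∈ B with v A < v (insert g' A)
  have hex : ∃ g' ∈ B, v A < v (insert g' A) := by
    by_contra hcon
    push_neg at hcon
    -- then all elements of B have nonpositive marginal over any superset of A
    have key : ∀ s : Finset E, s ⊆ B → v (A ∪ s) ≤ v A := by
      intro s
      induction s using Finset.induction_on with
      | empty => intro _; simp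
      | @insert a s ha ih =>
        intro hsub'
        have haB : a ∈ B := hsub' (Finset.mem_insert_self a s)
        have hsB : s ⊆ B := fun x hx => hsub' (Finset.mem_insert_of_mem hx)
        have h1 : v (insert a (A ∪ s)) ≤ v (A ∪ s) := by
          have := hsub (insert a A) (A ∪ s)
          have hu : insert a A ∪ (A ∪ s) = insert a (A ∪ s) := by
            simp [Finset.insert_union, ← Finset.union_assoc]
          have hi : v A ≤ v (insert a A ∩ (A ∪ s)) := by
            apply hmono
            intro x hx
            simp only [Finset.mem_inter, Finset.mem_insert, Finset.mem_union]
            exact ⟨Or.inr hx, Or.inl hx⟩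
          rw [hu] at this
          have := le_trans (add_le_add_right hi _) this
          have h2 := hcon a haB
          linarith
        calc v (A ∪ insert a s) = v (insert a (A ∪ s)) := by
              rw [Finset.union_insert]
          _ ≤ v (A ∪ s) := h1
          _ ≤ v A := ih hsB
    obtain ⟨g, hg⟩ := hB
    have h1 := henvy g hg
    have h2 : v (B.erase g) ≤ v B := hmono (Finset.erase_subset _ _)
    have h3 : v B ≤ v (A ∪ B) := hmono Finset.subset_union_right
    have h4 := key B (le_refl B)
    linarith
  obtain ⟨g', hg'B, hg'⟩ := hex
  refine ⟨g', hg'B, hg', lt_min hg' (henvy g' hg'B), ?_⟩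
  -- Step 2: min ≤ mmsR
  set t := min (v (insert g' A)) (v (B.erase g'))
  apply le_csSup
  · -- bddAbove
    refine ⟨v (A ∪ B), ?_⟩
    rintro x ⟨Y, _, hcover, hle⟩
    refine le_trans (hle 0) (hmono ?_)
    rw [← hcover]
    exact Finset.subset_biUnion_of_mem Y (Finset.mem_univ 0)
  · refine ⟨![insert g' A, B.erase g'], ?_, ?_, ?_⟩
    · intro a b hab
      have hd : Disjoint (insert g' A) (B.erase g') := by
        rw [Finset.disjoint_insert_left]
        exact ⟨Finset.notMem_erase g' B,
          hdisj.mono_right (Finset.erase_subset _ _)⟩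
      fin_cases a <;> fin_cases b <;> simp_all <;> exact hd.symm
    · ext x
      simp only [Finset.mem_biUnion, Finset.mem_univ, true_and, Finset.mem_union]
      constructor
      · rintro ⟨j, hj⟩
        fin_cases j <;> simp_all [Finset.mem_insert, Finset.mem_erase]
        · rcases hj with h | h
          · exact Or.inr (h ▸ hg'B)
          · exact Or.inl h
      · rintro (h | h)
        · exact ⟨0, by simp [h]⟩
        · by_cases hx : x = g'
          · exact ⟨0, by simp [hx]⟩
          · exact ⟨1, by simp [Finset.mem_erase, hx, h]⟩
    · intro j
      fin_cases j
      · exact min_le_left _ _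
      · exact min_le_right _ _
end

section
/- For a matroid M on [m] with rank function v, if (A_1, …, A_k) is a tuple of independent sets of M whose union B = A_1 ∪ … ∪ A_k is a maximum-size independent set in the k-fold union matroid M_{×k}, and the sizes are balanced (|A_j| ≥ |A_ℓ| − 1 for all j, ℓ), then the maximin share μ(k, [m]) equals min_j |A_j|. -/
lemma myrank_le_card {E : Type*} [Fintype E] [DecidableEq E]
    (M : FinMatroid E) (S : Finset E) : M.rank S ≤ S.card := by
  apply csSup_le' ; rintro t ⟨I, hIS, _, rfl⟩
  exact Finset.card_le_card hIS

lemma card_le_rank {E : Type*} [Fintype E] [DecidableEq E]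
    (M : FinMatroid E) {S I : Finset E} (hIS : I ⊆ S) (hI : M.Indep I) :
    I.card ≤ M.rank S := by
  refine le_csSup ⟨S.card, ?_⟩ ⟨I, hIS, hI, rfl⟩
  rintro t ⟨J, hJS, _, rfl⟩; exact Finset.card_le_card hJS

lemma exists_indep_rank {E : Type*} [Fintype E] [DecidableEq E]
    (M : FinMatroid E) (S : Finset E) :
    ∃ I : Finset E, I ⊆ S ∧ M.Indep I ∧ I.card = M.rank S := by
  have : M.rank S ∈ {t | ∃ I : Finset E, I ⊆ S ∧ M.Indep I ∧ I.card = t} := by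
    refine Nat.sSup_mem ⟨0, ∅, by simp, M.empty_indep, by simp⟩ ?_
    exact ⟨S.card, by rintro t ⟨J, hJS, _, rfl⟩; exact Finset.card_le_card hJS⟩
  exact this

/-- Rank function of the `k`-fold union of a matroid with itself: the maximum size of a
subset of `S` expressible as a union of `k` independent sets of `M`. -/
noncomputable def kUnionRank {E : Type*} [Fintype E] [DecidableEq E]
    (M : FinMatroid E) (k : ℕ) (S : Finset E) : ℕ :=
  sSup {t | ∃ J : Fin k → Finset E, (∀ j, M.Indep (J j)) ∧
    Finset.univ.biUnion J ⊆ S ∧ (Finset.univ.biUnion J).card = t}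

/-- If pairwise disjoint independent sets `A 0, …, A (k-1)` have balanced sizes and
their union is a maximum-size independent set of the `k`-fold union matroid, then the
maximin share `μ(k, [m])` equals the minimum bundle size. -/
theorem stmt9 {E : Type*} [Fintype E] [DecidableEq E] (M : FinMatroid E)
    {k : ℕ} (hk : 0 < k) (A : Fin k → Finset E)
    (hdisj : ∀ a b, a ≠ b → Disjoint (A a) (A b))
    (hind : ∀ j, M.Indep (A j))
    (hbal : ∀ j l, (A l).card ≤ (A j).card + 1)
    (hmax : (Finset.univ.biUnion A).card = kUnionRank M k Finset.univ) :
    mmsN M.rank k Finset.univ =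
      Finset.univ.inf' ⟨⟨0, hk⟩, Finset.mem_univ _⟩ (fun j => (A j).card) := by
  set t := Finset.univ.inf' ⟨⟨0, hk⟩, Finset.mem_univ _⟩ (fun j => (A j).card) with ht
  obtain ⟨j0, -, hj0⟩ := Finset.exists_mem_eq_inf' (⟨⟨0, hk⟩, Finset.mem_univ _⟩ :
    (Finset.univ : Finset (Fin k)).Nonempty) (fun j => (A j).card)
  have htle : ∀ j, t ≤ (A j).card := fun j => Finset.inf'_le _ (Finset.mem_univ j)
  have hub : ∀ j, (A j).card ≤ t + 1 := by
    intro j; rw [ht, hj0]; exact hbal j0 j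
  apply le_antisymm
  · -- upper bound
    apply csSup_le'
    rintro t' ⟨Y, hYdisj, hYun, hYr⟩
    by_contra h
    push_neg at h
    have ht1 : ∀ j, t + 1 ≤ M.rank (Y j) := fun j => le_trans h (hYr j)
    choose I hIsub hIind hIcard using fun j => exists_indep_rank M (Y j)
    have hcard : ∀ j, t + 1 ≤ (I j).card := fun j => (hIcard j) ▸ ht1 j
    choose I' hI'sub hI'card using fun j => Finset.exists_subset_card_eq (hcard j)
    have hI'Y : ∀ j, I' j ⊆ Y j := fun j => (hI'sub j).trans (hIsub j)
    have hI'disj : ∀ a b : Fin k, a ≠ b → Disjoint (I' a) (I' b) := fun a b hab =>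
      ((hYdisj a b hab).mono (hI'Y a) (hI'Y b))
    have hbig : k * (t + 1) ≤ kUnionRank M k Finset.univ := by
      refine le_csSup ⟨(Finset.univ : Finset E).card, ?_⟩
        ⟨I', fun j => M.subset_indep (hIind j) (hI'sub j), Finset.subset_univ _, ?_⟩
      · rintro s ⟨J, _, hJ, rfl⟩; exact Finset.card_le_card hJ
      · rw [Finset.card_biUnion (fun a _ b _ hab => hI'disj a b hab)]
        simp [hI'card, Finset.sum_const, mul_comm]
    have hsmall : (Finset.univ.biUnion A).card < k * (t + 1) := by
      rw [Finset.card_biUnion (fun a _ b _ hab => hdisj a b hab)]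
      calc ∑ j, (A j).card < ∑ _j : Fin k, (t + 1) := by
            refine Finset.sum_lt_sum (fun j _ => hub j) ⟨j0, Finset.mem_univ _, ?_⟩
            rw [← hj0, ← ht]; omega
        _ = k * (t + 1) := by simp [mul_comm]
    omega
  · -- lower bound
    set R := (Finset.univ : Finset E) \ Finset.univ.biUnion A with hR
    set Y : Fin k → Finset E := fun j => if j = ⟨0, hk⟩ then A j ∪ R else A j with hY
    have hAY : ∀ j, A j ⊆ Y j := by
      intro j; rw [hY]; dsimp only; split <;> simp
    have hRA : ∀ j, Disjoint R (A j) := by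
      intro j
      exact Finset.disjoint_of_subset_right (Finset.subset_biUnion_of_mem A (Finset.mem_univ j))
        Finset.sdiff_disjoint
    have hYdisj : ∀ a b, a ≠ b → Disjoint (Y a) (Y b) := by
      intro a b hab
      have hd := hdisj a b hab
      rw [hY]; dsimp only
      by_cases ha : a = ⟨0, hk⟩
      · subst ha
        rw [if_pos rfl, if_neg (Ne.symm hab)]
        exact Finset.disjoint_union_left.mpr ⟨hd, hRA b⟩
      · rw [if_neg ha]
        by_cases hb : b = ⟨0, hk⟩
        · rw [if_pos hb]
          exact Finset.disjoint_union_right.mpr ⟨hd, (hRA a).symm⟩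
        · rw [if_neg hb]; exact hd
    have hYun : Finset.univ.biUnion Y = Finset.univ := by
      apply Finset.eq_univ_iff_forall.mpr
      intro x
      rw [Finset.mem_biUnion]
      by_cases hx : x ∈ Finset.univ.biUnion A
      · obtain ⟨j, -, hj⟩ := Finset.mem_biUnion.mp hx
        exact ⟨j, Finset.mem_univ _, hAY j hj⟩
      · refine ⟨⟨0, hk⟩, Finset.mem_univ _, ?_⟩
        rw [hY]; simp [hR, hx]
    refine le_csSup ⟨(Finset.univ : Finset E).card, ?_⟩
      ⟨Y, hYdisj, hYun, fun j => ?_⟩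
    · rintro s ⟨Z, hZd, hZu, hZr⟩
      exact le_trans (hZr ⟨0, hk⟩) (le_trans (myrank_le_card M _) (Finset.card_le_card
        (Finset.subset_univ _)))
    · exact le_trans (htle j) (card_le_rank M (hAY j) (hind j))
end

section
/- Under binary additive valuations, an allocation is EF1 if and only if it is PMMS. -/
lemma biUnion_fin2 {E : Type*} [DecidableEq E] (Y : Fin 2 → Finset E) :
    Finset.univ.biUnion Y = Y 0 ∪ Y 1 := by
  ext x; simp [Fin.exists_fin_two]

lemma mms_mem_le {E : Type*} [Fintype E] [DecidableEq E] (w : E → ℕ) (S : Finset E)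
    {t : ℕ} (ht : t ∈ {t | ∃ Y : Fin 2 → Finset E,
      (∀ a b, a ≠ b → Disjoint (Y a) (Y b)) ∧ Finset.univ.biUnion Y = S ∧
      ∀ j, t ≤ ∑ x ∈ Y j, w x}) : 2 * t ≤ ∑ x ∈ S, w x := by
  obtain ⟨Y, hd, hc, hle⟩ := ht
  rw [biUnion_fin2] at hc
  have hsum : ∑ x ∈ S, w x = ∑ x ∈ Y 0, w x + ∑ x ∈ Y 1, w x := by
    rw [← hc, Finset.sum_union (hd 0 1 (by decide))]
  have h0 := hle 0
  have h1 := hle 1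
  omega

lemma mms_le_half {E : Type*} [Fintype E] [DecidableEq E] (w : E → ℕ) (S : Finset E) :
    mmsN (fun T => ∑ x ∈ T, w x) 2 S ≤ (∑ x ∈ S, w x) / 2 := by
  apply csSup_le
  · refine ⟨0, fun k => if k = 0 then S else ∅, ?_, ?_, fun j => Nat.zero_le _⟩
    · intro a b hab
      fin_cases a <;> fin_cases b <;> simp_all
    · rw [biUnion_fin2]; simp
  · intro t ht
    have := mms_mem_le w S ht
    omega

lemma half_le_mms {E : Type*} [Fintype E] [DecidableEq E] (w : E → ℕ)
    (hw : ∀ g, w g ≤ 1) (S : Finset E) :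
    (∑ x ∈ S, w x) / 2 ≤ mmsN (fun T => ∑ x ∈ T, w x) 2 S := by
  classical
  set T := S.filter (fun x => w x = 1) with hT
  have hTS : T ⊆ S := Finset.filter_subset _ _
  have hvS : ∑ x ∈ S, w x = T.card := by
    have h1 : ∑ x ∈ T, w x = ∑ x ∈ S, w x := by
      apply Finset.sum_subset hTS
      intro x hx hnx
      rw [hT, Finset.mem_filter] at hnx
      have h1 : w x ≠ 1 := fun h => hnx ⟨hx, h⟩
      have := hw x
      omega
    have h2 : ∑ x ∈ T, w x = T.card := by
      rw [Finset.card_eq_sum_ones]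
      apply Finset.sum_congr rfl
      intro x hx
      rw [hT, Finset.mem_filter] at hx
      exact hx.2
    rw [← h1, h2]
  obtain ⟨U, hUT, hUcard⟩ := Finset.exists_subset_card_eq (s := T) (n := T.card / 2) (Nat.div_le_self _ _)
  have hUS : U ⊆ S := hUT.trans hTS
  have hvU : ∑ x ∈ U, w x = T.card / 2 := by
    rw [← hUcard, Finset.card_eq_sum_ones]
    apply Finset.sum_congr rfl
    intro x hx
    have := hUT hx
    rw [hT, Finset.mem_filter] at this
    exact this.2
  have hvSd : T.card - T.card / 2 ≤ ∑ x ∈ S \ U, w x := by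
    have h1 : (T \ U).card = T.card - T.card / 2 := by
      rw [Finset.card_sdiff_of_subset hUT, hUcard]
    have h2 : ∑ x ∈ T \ U, w x = (T \ U).card := by
      rw [Finset.card_eq_sum_ones]
      apply Finset.sum_congr rfl
      intro x hx
      have := (Finset.sdiff_subset.trans (le_refl T).subset) hx
      rw [hT, Finset.mem_filter] at this
      exact this.2
    have h3 : ∑ x ∈ T \ U, w x ≤ ∑ x ∈ S \ U, w x :=
      Finset.sum_le_sum_of_subset (Finset.sdiff_subset_sdiff hTS (le_refl U))
    omega
  apply le_csSup
  · refine ⟨∑ x ∈ S, w x, ?_⟩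
    intro t ht
    have := mms_mem_le w S ht
    omega
  · refine ⟨fun k => if k = 0 then S \ U else U, ?_, ?_, ?_⟩
    · intro a b hab
      fin_cases a <;> fin_cases b
      · exact absurd rfl hab
      · simpa using Finset.sdiff_disjoint
      · simpa using Finset.sdiff_disjoint.symm
      · exact absurd rfl hab
    · rw [biUnion_fin2]
      simp [Finset.sdiff_union_of_subset hUS]
    · intro j
      fin_cases j
      · simpa [hvS] using le_trans (by omega : T.card / 2 ≤ T.card - T.card / 2) hvSd
      · simp [hvS, hvU]

/-- Under binary additive valuations, an allocation is EF1 iff it is PMMS. -/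
theorem stmt15 {n m : ℕ} (w : Fin n → Fin m → ℕ) (hw : ∀ i g, w i g ≤ 1)
    (A : Fin n → Finset (Fin m))
    (hdisj : ∀ a b, a ≠ b → Disjoint (A a) (A b))
    (hcover : Finset.univ.biUnion A = Finset.univ) :
    (∀ i j, (A j).Nonempty →
        ∃ g ∈ A j, ∑ x ∈ (A j).erase g, w i x ≤ ∑ x ∈ A i, w i x) ↔
    (∀ i j, mmsN (fun S => ∑ x ∈ S, w i x) 2 (A i ∪ A j) ≤ ∑ x ∈ A i, w i x) := by
  constructor
  · intro hEF1 i j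
    have hb : ∑ x ∈ A j, w i x ≤ ∑ x ∈ A i, w i x + 1 := by
      rcases (A j).eq_empty_or_nonempty with he | hne
      · simp [he]
      · obtain ⟨g, hg, hle⟩ := hEF1 i j hne
        have := Finset.sum_erase_add (A j) (w i) hg
        have := hw i g
        omega
    have hub := mms_le_half (w i) (A i ∪ A j)
    have hsum : ∑ x ∈ A i ∪ A j, w i x + ∑ x ∈ A i ∩ A j, w i x
        = ∑ x ∈ A i, w i x + ∑ x ∈ A j, w i x := Finset.sum_union_inter
    omega
  · intro hP i j hne
    have hb : ∑ x ∈ A j, w i x ≤ ∑ x ∈ A i, w i x + 1 := by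
      by_cases hij : i = j
      · subst hij; omega
      · have heq : ∑ x ∈ A i ∪ A j, w i x = ∑ x ∈ A i, w i x + ∑ x ∈ A j, w i x :=
          Finset.sum_union (hdisj i j hij)
        have hlb := half_le_mms (w i) (hw i) (A i ∪ A j)
        have := hP i j
        omega
    by_cases hb0 : ∑ x ∈ A j, w i x = 0
    · obtain ⟨g, hg⟩ := hne
      refine ⟨g, hg, ?_⟩
      have : ∑ x ∈ (A j).erase g, w i x ≤ ∑ x ∈ A j, w i x :=
        Finset.sum_le_sum_of_subset (Finset.erase_subset _ _)
      omega
    · obtain ⟨g, hg, hgne⟩ := Finset.exists_ne_zero_of_sum_ne_zero hb0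
      refine ⟨g, hg, ?_⟩
      have := Finset.sum_erase_add (A j) (w i) hg
      have := hw i g
      omega
end

section
/- Under binary additive valuations, every EF1 allocation is an MMS allocation: each agent receives value at least her n-agent maximin share. -/
lemma sum_partition {n m : ℕ} (f : Fin m → ℕ) (Y : Fin n → Finset (Fin m))
    (hdisj : ∀ a b : Fin n, a ≠ b → Disjoint (Y a) (Y b))
    (hcover : Finset.univ.biUnion Y = Finset.univ) :
    ∑ j : Fin n, ∑ x ∈ Y j, f x = ∑ x : Fin m, f x := by
  rw [← hcover, Finset.sum_biUnion]
  intro a _ b _ hab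
  exact hdisj a b hab

/-- Under binary additive valuations, every EF1 allocation is an MMS allocation. -/
theorem stmt16 {n m : ℕ} (w : Fin n → Fin m → ℕ) (hw : ∀ i g, w i g ≤ 1)
    (A : Fin n → Finset (Fin m))
    (hdisj : ∀ a b, a ≠ b → Disjoint (A a) (A b))
    (hcover : Finset.univ.biUnion A = Finset.univ)
    (hef1 : ∀ i j, (A j).Nonempty →
      ∃ g ∈ A j, ∑ x ∈ (A j).erase g, w i x ≤ ∑ x ∈ A i, w i x) :
    ∀ i, mmsN (fun S => ∑ x ∈ S, w i x) n Finset.univ ≤ ∑ x ∈ A i, w i x := by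
  intro i
  set c := ∑ x ∈ A i, w i x with hc
  have hn : 0 < n := Fin.pos i
  -- every agent's bundle has value at most c + 1
  have hbd : ∀ j, ∑ x ∈ A j, w i x ≤ c + 1 := by
    intro j
    rcases (A j).eq_empty_or_nonempty with h | h
    · simp [h]
    · obtain ⟨g, hg, hle⟩ := hef1 i j h
      have : ∑ x ∈ A j, w i x = w i g + ∑ x ∈ (A j).erase g, w i x :=
        (Finset.add_sum_erase _ _ hg).symm
      have := this ▸ Nat.add_le_add (hw i g) hle
      omega
  have htot : ∑ x : Fin m, w i x ≤ c + (n - 1) * (c + 1) := by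
    have h1 : ∑ j : Fin n, ∑ x ∈ A j, w i x = ∑ x : Fin m, w i x :=
      sum_partition (w i) A hdisj hcover
    have h2 : ∑ j : Fin n, ∑ x ∈ A j, w i x ≤
        ∑ j : Fin n, (if j = i then c else c + 1) := by
      apply Finset.sum_le_sum
      intro j _
      by_cases hj : j = i
      · simp [hj, hc]
      · simp [hj]; exact hbd j
    have h3 : ∑ j : Fin n, (if j = i then c else c + 1) = c + (n - 1) * (c + 1) := by
      rw [← Finset.add_sum_erase _ _ (Finset.mem_univ i), if_pos rfl,
        Finset.sum_congr rfl (fun x hx => if_neg (Finset.ne_of_mem_erase hx)),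
        Finset.sum_const, Finset.card_erase_of_mem (Finset.mem_univ i)]
      simp [mul_comm]
    omega
  apply csSup_le'
  rintro t ⟨Y, hYdisj, hYcover, hYlb⟩
  have hsum : n * t ≤ ∑ x : Fin m, w i x := by
    have := sum_partition (w i) Y hYdisj hYcover
    calc n * t = ∑ _j : Fin n, t := by simp [mul_comm]
      _ ≤ ∑ j : Fin n, ∑ x ∈ Y j, w i x := Finset.sum_le_sum fun j _ => hYlb j
      _ = ∑ x : Fin m, w i x := this
  by_contra hlt
  push_neg at hlt
  have h1 : n * (c + 1) ≤ n * t := Nat.mul_le_mul_left n hlt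
  have key : n * (c + 1) = (c + 1) + (n - 1) * (c + 1) := by
    cases n with
    | zero => omega
    | succ k => simp [Nat.succ_mul, Nat.add_comm]
  linarith [htot, hsum, h1, key]
end

section
/- Let (A_1,…,A_n) with each A_i independent in matroid M_i be a tuple of disjoint sets, and let P = (g_1,…,g_t) be a shortest directed path in the exchange graph from F_i(A_i) to A_j (i ≠ j). Then augmenting along P yields A_k Δ P independent in M_k for all k ∉ {i, j}, (A_i Δ P) ∪ {g_1} independent in M_i, and A_j \ {g_t} independent in M_j. -/
/-- The edge relation of the exchange graph: `(a, b)` is an edge iff for some agent `i`,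
`a ∈ A i`, `b ∉ A i`, and swapping preserves independence. -/
def edgeRel {n m : ℕ} (Ms : Fin n → FinMatroid (Fin m))
    (A : Fin n → Finset (Fin m)) (a b : Fin m) : Prop :=
  ∃ i, a ∈ A i ∧ b ∉ A i ∧ (Ms i).Indep (insert b ((A i).erase a))

/-- The set of endpoints of edges of a path `P` that leave `Ak`. -/
def pathSwap {m : ℕ} (Ak : Finset (Fin m)) (P : List (Fin m)) : Finset (Fin m) :=
  ((P.zip P.tail).filter (fun p => decide (p.1 ∈ Ak))).foldr
    (fun p s => insert p.1 (insert p.2 s)) ∅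

set_option linter.unusedSectionVars false

namespace FinMatroid

variable {E : Type*} [Fintype E] [DecidableEq E] (M : FinMatroid E)

lemma dep_superset {S T : Finset E} (h : ¬ M.Indep S) (hST : S ⊆ T) : ¬ M.Indep T :=
  fun hT => h (M.subset_indep hT hST)

lemma exists_circuit {D : Finset E} (hD : ¬ M.Indep D) :
    ∃ C, C ⊆ D ∧ ¬ M.Indep C ∧ ∀ z ∈ C, M.Indep (C.erase z) := by
  classical
  obtain ⟨C, hC, hmin⟩ := Finset.exists_min_image
    (D.powerset.filter (fun S => ¬ M.Indep S)) Finset.card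
    ⟨D, by simp [hD]⟩
  simp only [Finset.mem_filter, Finset.mem_powerset] at hC
  refine ⟨C, hC.1, hC.2, fun z hz => ?_⟩
  by_contra hdep
  have hle := hmin (C.erase z) (by
    simp only [Finset.mem_filter, Finset.mem_powerset]
    exact ⟨(Finset.erase_subset _ _).trans hC.1, hdep⟩)
  have := Finset.card_erase_lt_of_mem hz
  omega

lemma circuit_char {I C : Finset E} {y : E} (hI : M.Indep I) (hy : y ∉ I)
    (hCsub : C ⊆ insert y I) (hCdep : ¬ M.Indep C)
    (hCmin : ∀ z ∈ C, M.Indep (C.erase z)) :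
    ∀ z ∈ I, (M.Indep (insert y (I.erase z)) ↔ z ∈ C) := by
  classical
  intro z hz
  have hzy : z ≠ y := fun h => hy (h ▸ hz)
  have hDz : insert y (I.erase z) = (insert y I).erase z := by
    rw [Finset.erase_insert_of_ne hzy.symm]
  constructor
  · intro hind
    by_contra hzC
    refine hCdep (M.subset_indep hind ?_)
    intro c hc
    have hcD := hCsub hc
    rw [hDz, Finset.mem_erase]
    exact ⟨fun h => hzC (h ▸ hc), hcD⟩
  · intro hzC
    by_contra hdep
    set D := insert y I with hDdef
    have hDcard : D.card = I.card + 1 := Finset.card_insert_of_notMem hy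
    have hDdep : ¬ M.Indep D := M.dep_superset hCdep hCsub
    have hne : (D.powerset.filter (fun S => M.Indep S ∧ C.erase z ⊆ S)).Nonempty := by
      refine ⟨C.erase z, ?_⟩
      simp only [Finset.mem_filter, Finset.mem_powerset]
      exact ⟨(Finset.erase_subset _ _).trans hCsub, hCmin z hzC, Finset.Subset.refl _⟩
    obtain ⟨M₀, hM₀, hmax⟩ := Finset.exists_max_image _ Finset.card hne
    simp only [Finset.mem_filter, Finset.mem_powerset] at hM₀
    obtain ⟨hM₀D, hM₀ind, hCzM₀⟩ := hM₀
    have hlt : I.card ≤ M₀.card := by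
      by_contra hltc
      push_neg at hltc
      obtain ⟨g, hg, hgind⟩ := M.aug hM₀ind hI hltc
      rw [Finset.mem_sdiff] at hg
      have hmem : insert g M₀ ∈ D.powerset.filter (fun S => M.Indep S ∧ C.erase z ⊆ S) := by
        simp only [Finset.mem_filter, Finset.mem_powerset]
        exact ⟨Finset.insert_subset (Finset.mem_insert_of_mem hg.1) hM₀D, hgind,
          hCzM₀.trans (Finset.subset_insert _ _)⟩
      have := hmax _ hmem
      rw [Finset.card_insert_of_notMem hg.2] at this
      omega
    have hneq : M₀ ≠ D := fun h => hDdep (h ▸ hM₀ind)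
    have hlt2 : M₀.card < D.card := Finset.card_lt_card (ssubset_of_subset_of_ne hM₀D hneq)
    have hcardM₀ : M₀.card = I.card := by omega
    have hsd : (D \ M₀).card = 1 := by rw [Finset.card_sdiff_of_subset hM₀D]; omega
    obtain ⟨w, hw⟩ := Finset.card_eq_one.mp hsd
    have hwD : w ∈ D ∧ w ∉ M₀ := by
      have : w ∈ D \ M₀ := hw ▸ Finset.mem_singleton_self w
      exact Finset.mem_sdiff.mp this
    have hM₀eq : M₀ = D.erase w := by
      apply Finset.eq_of_subset_of_card_le
      · intro c hc
        exact Finset.mem_erase.mpr ⟨fun h => hwD.2 (h ▸ hc), hM₀D hc⟩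
      · rw [Finset.card_erase_of_mem hwD.1]; omega
    have hwCz : w ∉ C.erase z := fun h => hwD.2 (hCzM₀ h)
    rcases eq_or_ne w z with rfl | hwz
    · exact hdep (by rw [hDz, ← hM₀eq]; exact hM₀ind)
    · have hwC : w ∉ C := fun h => hwCz (Finset.mem_erase.mpr ⟨hwz, h⟩)
      refine hCdep (M.subset_indep hM₀ind ?_)
      intro c hc
      rw [hM₀eq, Finset.mem_erase]
      exact ⟨fun h => hwC (h ▸ hc), hCsub hc⟩

end FinMatroid


namespace FinMatroid

variable {E : Type*} [Fintype E] [DecidableEq E] (M : FinMatroid E)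

/-- The triangular exchange lemma: swapping along a list of exchange pairs with the
"no forward exchange" (triangularity) condition preserves independence. -/
lemma tri : ∀ (L : List (E × E)) (I : Finset E), M.Indep I →
    (∀ p ∈ L, p.1 ∈ I ∧ p.2 ∉ I ∧ M.Indep (insert p.2 (I.erase p.1))) →
    L.Pairwise (fun u v => u.1 ≠ v.1 ∧ u.2 ≠ v.2 ∧
      ¬ M.Indep (insert v.2 (I.erase u.1))) →
    M.Indep ((I \ (L.map Prod.fst).toFinset) ∪ (L.map Prod.snd).toFinset) := by
  intro L
  induction L with
  | nil => intro I hI _ _; simpa using hI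
  | cons p L' ih =>
    intro I hI hmem hpair
    obtain ⟨hp1, hp2, hpE1⟩ := hmem p (List.mem_cons_self)
    rw [List.pairwise_cons] at hpair
    obtain ⟨hphead, hpair'⟩ := hpair
    set I₂ : Finset E := insert p.2 (I.erase p.1) with hI₂def
    have hI₂ : M.Indep I₂ := hpE1
    -- transfer the hypotheses to I₂
    have hmem' : ∀ q ∈ L', q.1 ∈ I₂ ∧ q.2 ∉ I₂ ∧ M.Indep (insert q.2 (I₂.erase q.1)) := by
      intro q hq
      obtain ⟨hq1, hq2, hqE1⟩ := hmem q (List.mem_cons_of_mem _ hq)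
      obtain ⟨hne1, hne2, hdep⟩ := hphead q hq
      have hq1I₂ : q.1 ∈ I₂ := Finset.mem_insert_of_mem
        (Finset.mem_erase.mpr ⟨hne1.symm, hq1⟩)
      have hq2I₂ : q.2 ∉ I₂ := by
        simp only [hI₂def, Finset.mem_insert, Finset.mem_erase]
        push_neg
        exact ⟨hne2.symm, fun _ => hq2⟩
      refine ⟨hq1I₂, hq2I₂, ?_⟩
      -- circuit argument
      have hDdep : ¬ M.Indep (insert q.2 I) :=
        M.dep_superset hdep (Finset.insert_subset_insert _ (Finset.erase_subset _ _))
      obtain ⟨C, hCsub, hCdep, hCmin⟩ := M.exists_circuit hDdep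
      have hchar := M.circuit_char hI hq2 hCsub hCdep hCmin
      have hq1C : q.1 ∈ C := (hchar q.1 hq1).mp hqE1
      have hp1C : p.1 ∉ C := fun h => hdep ((hchar p.1 hp1).mpr h)
      have hCsub' : C ⊆ insert q.2 I₂ := by
        intro c hc
        have := hCsub hc
        rw [Finset.mem_insert] at this ⊢
        rcases this with h | h
        · exact Or.inl h
        · exact Or.inr (Finset.mem_insert_of_mem
            (Finset.mem_erase.mpr ⟨fun he => hp1C (he ▸ hc), h⟩))
      have hchar' := M.circuit_char hI₂ hq2I₂ hCsub' hCdep hCmin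
      exact (hchar' q.1 hq1I₂).mpr hq1C
    have hpair'' : L'.Pairwise (fun u v => u.1 ≠ v.1 ∧ u.2 ≠ v.2 ∧
        ¬ M.Indep (insert v.2 (I₂.erase u.1))) := by
      refine List.Pairwise.imp_of_mem ?_ hpair'
      intro u v hu hv huv
      obtain ⟨hne1, hne2, hdepuv⟩ := huv
      refine ⟨hne1, hne2, ?_⟩
      obtain ⟨hu1, hu2, huE1⟩ := hmem u (List.mem_cons_of_mem _ hu)
      obtain ⟨hv1, hv2, hvE1⟩ := hmem v (List.mem_cons_of_mem _ hv)
      obtain ⟨hneu1, hneu2, hdepu⟩ := hphead u hu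
      obtain ⟨hnev1, hnev2, hdepv⟩ := hphead v hv
      have hu1I₂ : u.1 ∈ I₂ := Finset.mem_insert_of_mem
        (Finset.mem_erase.mpr ⟨hneu1.symm, hu1⟩)
      have hv2I₂ : v.2 ∉ I₂ := by
        simp only [hI₂def, Finset.mem_insert, Finset.mem_erase]
        push_neg
        exact ⟨hnev2.symm, fun _ => hv2⟩
      have hDdep : ¬ M.Indep (insert v.2 I) :=
        M.dep_superset hdepv (Finset.insert_subset_insert _ (Finset.erase_subset _ _))
      obtain ⟨C, hCsub, hCdep, hCmin⟩ := M.exists_circuit hDdep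
      have hchar := M.circuit_char hI hv2 hCsub hCdep hCmin
      have hu1C : u.1 ∉ C := fun h => hdepuv ((hchar u.1 hu1).mpr h)
      have hp1C : p.1 ∉ C := fun h => hdepv ((hchar p.1 hp1).mpr h)
      have hCsub' : C ⊆ insert v.2 I₂ := by
        intro c hc
        have := hCsub hc
        rw [Finset.mem_insert] at this ⊢
        rcases this with h | h
        · exact Or.inl h
        · exact Or.inr (Finset.mem_insert_of_mem
            (Finset.mem_erase.mpr ⟨fun he => hp1C (he ▸ hc), h⟩))
      have hchar' := M.circuit_char hI₂ hv2I₂ hCsub' hCdep hCmin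
      exact fun hind => hu1C ((hchar' u.1 hu1I₂).mp hind)
    have hres := ih I₂ hI₂ hmem' hpair''
    have hset : (I₂ \ (L'.map Prod.fst).toFinset) ∪ (L'.map Prod.snd).toFinset =
        (I \ ((p :: L').map Prod.fst).toFinset) ∪ ((p :: L').map Prod.snd).toFinset := by
      have hp2X : ∀ q ∈ L', q.1 ≠ p.2 := fun q hq h =>
        hp2 (h ▸ (hmem q (List.mem_cons_of_mem _ hq)).1)
      ext c
      simp only [hI₂def, Finset.mem_union, Finset.mem_sdiff, Finset.mem_insert,
        Finset.mem_erase, List.map_cons, List.toFinset_cons, List.mem_toFinset,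
        List.mem_map]
      constructor
      · rintro (⟨(rfl | ⟨hcp1, hcI⟩), hcX⟩ | hcY)
        · exact Or.inr (Or.inl rfl)
        · exact Or.inl ⟨hcI, fun h => h.elim (fun h' => hcp1 h') hcX⟩
        · exact Or.inr (Or.inr hcY)
      · rintro (⟨hcI, hc⟩ | (rfl | hcY))
        · push_neg at hc
          exact Or.inl ⟨Or.inr ⟨hc.1, hcI⟩, fun ⟨q, hq, hq1⟩ => hc.2 q hq hq1⟩
        · exact Or.inl ⟨Or.inl rfl, fun ⟨q, hq, hq1⟩ => hp2X q hq hq1⟩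
        · exact Or.inr hcY
    rwa [hset] at hres

end FinMatroid

namespace FinMatroid

variable {E : Type*} [Fintype E] [DecidableEq E] (M : FinMatroid E)

/-- Variant of `tri` with an extra element `y₀` inserted (for the source agent). -/
lemma tri' (L : List (E × E)) (I : Finset E) (y₀ : E) (hI : M.Indep I)
    (hy₀ : y₀ ∉ I) (hy₀ind : M.Indep (insert y₀ I))
    (hmem : ∀ p ∈ L, p.1 ∈ I ∧ p.2 ∉ I ∧ p.2 ≠ y₀ ∧
      M.Indep (insert p.2 (I.erase p.1)) ∧ ¬ M.Indep (insert p.2 I))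
    (hpair : L.Pairwise (fun u v => u.1 ≠ v.1 ∧ u.2 ≠ v.2 ∧
      ¬ M.Indep (insert v.2 (I.erase u.1)))) :
    M.Indep (insert y₀ ((I \ (L.map Prod.fst).toFinset) ∪ (L.map Prod.snd).toFinset)) := by
  set I₂ : Finset E := insert y₀ I with hI₂def
  have hmem' : ∀ q ∈ L, q.1 ∈ I₂ ∧ q.2 ∉ I₂ ∧ M.Indep (insert q.2 (I₂.erase q.1)) := by
    intro q hq
    obtain ⟨hq1, hq2, hq2y, hqE1, hqdep⟩ := hmem q hq
    have hq1I₂ : q.1 ∈ I₂ := Finset.mem_insert_of_mem hq1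
    have hq2I₂ : q.2 ∉ I₂ := by
      simp only [hI₂def, Finset.mem_insert]
      push_neg
      exact ⟨hq2y, hq2⟩
    refine ⟨hq1I₂, hq2I₂, ?_⟩
    obtain ⟨C, hCsub, hCdep, hCmin⟩ := M.exists_circuit hqdep
    have hchar := M.circuit_char hI hq2 hCsub hCdep hCmin
    have hq1C : q.1 ∈ C := (hchar q.1 hq1).mp hqE1
    have hCsub' : C ⊆ insert q.2 I₂ := hCsub.trans
      (Finset.insert_subset_insert _ (Finset.subset_insert _ _))
    have hchar' := M.circuit_char hy₀ind hq2I₂ hCsub' hCdep hCmin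
    exact (hchar' q.1 hq1I₂).mpr hq1C
  have hpair' : L.Pairwise (fun u v => u.1 ≠ v.1 ∧ u.2 ≠ v.2 ∧
      ¬ M.Indep (insert v.2 (I₂.erase u.1))) := by
    refine List.Pairwise.imp_of_mem ?_ hpair
    intro u v hu hv huv
    obtain ⟨hne1, hne2, hdepuv⟩ := huv
    refine ⟨hne1, hne2, ?_⟩
    obtain ⟨hu1, hu2, hu2y, huE1, hudep⟩ := hmem u hu
    obtain ⟨hv1, hv2, hv2y, hvE1, hvdep⟩ := hmem v hv
    have hu1I₂ : u.1 ∈ I₂ := Finset.mem_insert_of_mem hu1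
    have hv2I₂ : v.2 ∉ I₂ := by
      simp only [hI₂def, Finset.mem_insert]; push_neg; exact ⟨hv2y, hv2⟩
    obtain ⟨C, hCsub, hCdep, hCmin⟩ := M.exists_circuit hvdep
    have hchar := M.circuit_char hI hv2 hCsub hCdep hCmin
    have hu1C : u.1 ∉ C := fun h => hdepuv ((hchar u.1 hu1).mpr h)
    have hCsub' : C ⊆ insert v.2 I₂ := hCsub.trans
      (Finset.insert_subset_insert _ (Finset.subset_insert _ _))
    have hchar' := M.circuit_char hy₀ind hv2I₂ hCsub' hCdep hCmin
    exact fun hind => hu1C ((hchar' u.1 hu1I₂).mp hind)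
  have hres := M.tri L I₂ hy₀ind hmem' hpair'
  have hset : (I₂ \ (L.map Prod.fst).toFinset) ∪ (L.map Prod.snd).toFinset =
      insert y₀ ((I \ (L.map Prod.fst).toFinset) ∪ (L.map Prod.snd).toFinset) := by
    have hy₀X : ∀ q ∈ L, q.1 ≠ y₀ := fun q hq h => hy₀ (h ▸ (hmem q hq).1)
    ext c
    simp only [hI₂def, Finset.mem_union, Finset.mem_sdiff, Finset.mem_insert,
      List.mem_toFinset, List.mem_map]
    constructor
    · rintro (⟨(rfl | hcI), hcX⟩ | hcY)
      · exact Or.inl rfl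
      · exact Or.inr (Or.inl ⟨hcI, hcX⟩)
      · exact Or.inr (Or.inr hcY)
    · rintro (rfl | (⟨hcI, hcX⟩ | hcY))
      · exact Or.inl ⟨Or.inl rfl, fun ⟨q, hq, hq1⟩ => hy₀X q hq hq1⟩
      · exact Or.inl ⟨Or.inr hcI, hcX⟩
      · exact Or.inr hcY
  rwa [hset] at hres

end FinMatroid


section Path

variable {n m : ℕ} (Ms : Fin n → FinMatroid (Fin m)) (A : Fin n → Finset (Fin m))
  (i j : Fin n) (P : List (Fin m)) (hP : P ≠ [])
  (hchain : P.Chain' (edgeRel Ms A))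
  (hhead : P.head hP ∉ A i ∧ (Ms i).Indep (insert (P.head hP) (A i)))
  (hlast : P.getLast hP ∈ A j)
  (hshort : ∀ (Q : List (Fin m)) (hQ : Q ≠ []), Q.Chain' (edgeRel Ms A) →
      (Q.head hQ ∉ A i ∧ (Ms i).Indep (insert (Q.head hQ) (A i))) →
      Q.getLast hQ ∈ A j → P.length ≤ Q.length)

include hchain hhead hlast hshort

/-- Splicing out a middle portion of the path yields a contradiction with minimality. -/
lemma glue_short (a c : ℕ) (ha : a < P.length) (hc : c ≤ P.length) (hlt : a + 1 < c)
    (hbridge : ∀ (hc' : c < P.length), edgeRel Ms A (P[a]'ha) (P[c]'hc'))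
    (hlastA : c = P.length → P[a]'ha ∈ A j) : False := by
  set Q : List (Fin m) := P.take (a+1) ++ P.drop c with hQdef
  have htake_len : (P.take (a+1)).length = a + 1 := by
    rw [List.length_take]; omega
  have hQlen : Q.length = (a+1) + (P.length - c) := by
    simp [hQdef, List.length_append, List.length_take, List.length_drop]; omega
  have hQne : Q ≠ [] := by
    have : 0 < Q.length := by omega
    exact List.length_pos_iff.mp this
  have hQ0 : Q.head hQne = P.head hP := by
    rw [List.head_eq_getElem, List.head_eq_getElem]
    rw [List.getElem_append_left (by omega : 0 < (P.take (a+1)).length)]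
    exact List.getElem_take (xs := P)
  have htake_last : (P.take (a+1)).getLast? = some (P[a]'ha) := by
    rw [List.getLast?_eq_getElem?, htake_len, Nat.add_sub_cancel,
      List.getElem?_eq_getElem (by omega)]
    congr 1
    exact List.getElem_take (xs := P)
  have hQchain : Q.Chain' (edgeRel Ms A) := by
    rw [hQdef]; refine List.isChain_append.mpr ?_
    refine ⟨hchain.take _, hchain.drop _, ?_⟩
    intro x hx y hy
    rw [List.head?_drop] at hy
    rw [Option.mem_def] at hy
    obtain ⟨hc', rfl⟩ := List.getElem?_eq_some_iff.mp hy
    rw [htake_last, Option.mem_def, Option.some_inj] at hx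
    subst hx
    exact hbridge hc'
  have hQlast : Q.getLast hQne ∈ A j := by
    rcases lt_or_eq_of_le hc with hc' | hc'
    · have hQl : Q.getLast hQne = P.getLast hP := by
        rw [List.getLast_eq_getElem, List.getLast_eq_getElem]
        have h1 : (P.take (a+1)).length ≤ Q.length - 1 := by omega
        rw [List.getElem_append_right h1]
        rw [List.getElem_drop (xs := P)]
        congr 1
        omega
      rw [hQl]; exact hlast
    · have hQl : Q.getLast hQne = P[a]'ha := by
        rw [List.getLast_eq_getElem]
        have h1 : Q.length - 1 < (P.take (a+1)).length := by omega
        rw [List.getElem_append_left h1]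
        have : Q.length - 1 = a := by
          rw [hQlen]; omega
        simp only [this]
        exact List.getElem_take (xs := P)
      rw [hQl]; exact hlastA hc'
  have := hshort Q hQne hQchain (by rw [hQ0]; exact hhead) hQlast
  omega

/-- Vertices of a shortest path are distinct. -/
lemma path_nodup : P.Nodup := by
  rw [List.Nodup, List.pairwise_iff_getElem]
  intro a b ha hb hab
  by_contra heq
  rcases eq_or_lt_of_le (Nat.succ_le_of_lt hb) with hb' | hb'
  · -- b is the last index
    refine glue_short Ms A i j P hP hchain hhead hlast hshort a P.length ha le_rfl
      (by omega) (fun hc' => absurd hc' (lt_irrefl _)) (fun _ => ?_)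
    have : P.getLast hP = P[b]'hb := by
      rw [List.getLast_eq_getElem]
      congr 1
      omega
    rw [heq, ← this]
    exact hlast
  · -- b+1 < P.length, splice with the edge (P[b], P[b+1])
    have hb1 : b + 1 < P.length := hb'
    refine glue_short Ms A i j P hP hchain hhead hlast hshort a (b+1) ha (by omega)
      (by omega) (fun hc' => ?_) (fun h => by omega)
    have hedge := List.isChain_iff_getElem.mp hchain b (by omega)
    rwa [← heq] at hedge
  
/-- No chords on a shortest path. -/
lemma path_nochord (a b : ℕ) (ha : a < P.length) (hb : b < P.length) (h2 : a + 2 ≤ b)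
    (hedge : edgeRel Ms A (P[a]'ha) (P[b]'hb)) : False := by
  refine glue_short Ms A i j P hP hchain hhead hlast hshort a b ha (le_of_lt hb)
    (by omega) (fun hc' => hedge) (fun h => by omega)

/-- No interior vertex of a shortest path is in `F_i(A i)`. -/
lemma path_noF (r : ℕ) (hr : r < P.length) (hr0 : 0 < r) (hrA : P[r]'hr ∉ A i) :
    ¬ (Ms i).Indep (insert (P[r]'hr) (A i)) := by
  intro hind
  set Q : List (Fin m) := P.drop r with hQdef
  have hQlen : Q.length = P.length - r := List.length_drop
  have hQne : Q ≠ [] := List.length_pos_iff.mp (by omega)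
  have hQ0 : Q.head hQne = P[r]'hr := List.head_drop hQne
  have hQlast : Q.getLast hQne = P.getLast hP := List.getLast_drop hQne
  have := hshort Q hQne (hchain.drop r) (by rw [hQ0]; exact ⟨hrA, hind⟩)
    (by rw [hQlast]; exact hlast)
  omega

end Path

/-- Augmenting along a shortest path in the exchange graph from `F_i(A i)` to `A j`
keeps every bundle independent: `A k Δ P` for `k ∉ {i,j}`, `(A i Δ P) + g₁` for agent
`i`, and `A j - g_t` for agent `j`. -/
theorem stmt17 {n m : ℕ} (Ms : Fin n → FinMatroid (Fin m))
    (A : Fin n → Finset (Fin m))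
    (hdisj : ∀ a b, a ≠ b → Disjoint (A a) (A b))
    (hind : ∀ k, (Ms k).Indep (A k))
    (i j : Fin n) (hij : i ≠ j)
    (P : List (Fin m)) (hP : P ≠ [])
    (hchain : P.Chain' (edgeRel Ms A))
    (hhead : P.head hP ∉ A i ∧ (Ms i).Indep (insert (P.head hP) (A i)))
    (hlast : P.getLast hP ∈ A j)
    (hshort : ∀ (Q : List (Fin m)) (hQ : Q ≠ []), Q.Chain' (edgeRel Ms A) →
      (Q.head hQ ∉ A i ∧ (Ms i).Indep (insert (Q.head hQ) (A i))) →
      Q.getLast hQ ∈ A j → P.length ≤ Q.length) :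
    (∀ k, k ≠ i → k ≠ j → (Ms k).Indep (symmDiff (A k) (pathSwap (A k) P))) ∧
    (Ms i).Indep (insert (P.head hP) (symmDiff (A i) (pathSwap (A i) P))) ∧
    (Ms j).Indep ((A j).erase (P.getLast hP)) := by
  classical
  have hnodup : P.Pairwise (· ≠ ·) :=
    path_nodup Ms A i j P hP hchain hhead hlast hshort
  have hnd : ∀ (a b : ℕ) (ha : a < P.length) (hb : b < P.length), a ≠ b →
      P[a]'ha ≠ P[b]'hb := by
    intro a b ha hb hne
    have h := List.pairwise_iff_getElem.mp hnodup
    rcases lt_or_gt_of_ne hne with h' | h'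
    · exact h a b ha hb h'
    · exact (h b a hb ha h').symm
  have hEz : ∀ (r : ℕ) (h : r + 1 < P.length),
      edgeRel Ms A (P[r]'(by omega)) (P[r+1]'h) := by
    intro r h
    have := List.isChain_iff_getElem.mp hchain r (by omega)
    simpa using this
  have hagent : ∀ (k : Fin n) (x y : Fin m), x ∈ A k → edgeRel Ms A x y →
      y ∉ A k ∧ (Ms k).Indep (insert y ((A k).erase x)) := by
    rintro k x y hx ⟨i', h1, h2, h3⟩
    rcases eq_or_ne i' k with rfl | hne
    · exact ⟨h2, h3⟩
    · exact absurd hx (Finset.disjoint_left.mp (hdisj i' k hne) h1)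
  have hziplen : (P.zip P.tail).length = P.length - 1 := by
    simp [List.length_zip, List.length_tail]
  have hmemL : ∀ (k : Fin n), ∀ p ∈ (P.zip P.tail).filter (fun p => decide (p.1 ∈ A k)),
      ∃ (r : ℕ) (h : r + 1 < P.length),
        p.1 = P[r]'(by omega) ∧ p.2 = P[r+1]'h ∧ p.1 ∈ A k ∧ p.2 ∉ A k ∧
        (Ms k).Indep (insert p.2 ((A k).erase p.1)) := by
    intro k p hp
    rw [List.mem_filter, decide_eq_true_iff] at hp
    obtain ⟨hpE, hp1⟩ := hp
    obtain ⟨r, hr, hpe⟩ := List.mem_iff_getElem.mp hpE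
    rw [hziplen] at hr
    have hr1 : r + 1 < P.length := by omega
    rw [List.getElem_zip] at hpe
    have h1 : p.1 = P[r]'(by omega) := by rw [← hpe]
    have h2 : p.2 = P[r+1]'hr1 := by
      rw [← hpe]
      simp [List.getElem_tail]
    have hP1 : (P[r]'(by omega : r < P.length)) ∈ A k := h1 ▸ hp1
    have hag := hagent k _ _ hP1 (hEz r hr1)
    refine ⟨r, hr1, h1, h2, hp1, ?_, ?_⟩
    · rw [h2]; exact hag.1
    · rw [h1, h2]; exact hag.2
  have hpairL : ∀ (k : Fin n),
      ((P.zip P.tail).filter (fun p => decide (p.1 ∈ A k))).Pairwise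
        (fun u v => u.1 ≠ v.1 ∧ u.2 ≠ v.2 ∧
          ¬ (Ms k).Indep (insert v.2 ((A k).erase u.1))) := by
    intro k
    have hpE : (P.zip P.tail).Pairwise (fun u v => u.1 ∈ A k → v.1 ∈ A k →
        (u.1 ≠ v.1 ∧ u.2 ≠ v.2 ∧
          ¬ (Ms k).Indep (insert v.2 ((A k).erase u.1)))) := by
      rw [List.pairwise_iff_getElem]
      intro a b ha hb hab
      rw [hziplen] at ha hb
      simp only [List.getElem_zip, List.getElem_tail]
      intro hu hv
      have ha1 : a + 1 < P.length := by omega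
      have hb1 : b + 1 < P.length := by omega
      refine ⟨hnd a b (by omega) (by omega) (by omega),
        hnd (a+1) (b+1) ha1 hb1 (by omega), ?_⟩
      intro hindep
      have hbh := (hagent k _ _ hv (hEz b hb1)).1
      exact path_nochord Ms A i j P hP hchain hhead hlast hshort a (b+1)
        (by omega) hb1 (by omega) ⟨k, hu, hbh, hindep⟩
    refine List.Pairwise.imp_of_mem ?_ (hpE.filter _)
    intro u v hu hv h
    rw [List.mem_filter, decide_eq_true_iff] at hu hv
    exact h hu.2 hv.2
  have hfold : ∀ (L : List (Fin m × Fin m)),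
      L.foldr (fun p s => insert p.1 (insert p.2 s)) ∅ =
        (L.map Prod.fst).toFinset ∪ (L.map Prod.snd).toFinset := by
    intro L
    induction L with
    | nil => simp
    | cons p L ih =>
      simp only [List.foldr_cons, ih, List.map_cons, List.toFinset_cons]
      ext c
      simp only [Finset.mem_insert, Finset.mem_union, List.mem_toFinset]
      tauto
  have hsymm : ∀ (k : Fin n),
      symmDiff (A k) (pathSwap (A k) P) =
        ((A k) \ ((((P.zip P.tail).filter (fun p => decide (p.1 ∈ A k))).map
            Prod.fst).toFinset)) ∪
          ((((P.zip P.tail).filter (fun p => decide (p.1 ∈ A k))).map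
            Prod.snd).toFinset) := by
    intro k
    rw [pathSwap, hfold]
    ext c
    rw [Finset.mem_symmDiff]
    simp only [Finset.mem_union, Finset.mem_sdiff, List.mem_toFinset, List.mem_map]
    constructor
    · rintro (⟨hcA, hno⟩ | ⟨hXY, hcA⟩)
      · exact Or.inl ⟨hcA, fun h => hno (Or.inl h)⟩
      · rcases hXY with hx | hy
        · obtain ⟨q, hq, rfl⟩ := hx
          exact absurd (hmemL k q hq).choose_spec.choose_spec.2.2.1 hcA
        · exact Or.inr hy
    · rintro (⟨hcA, hnX⟩ | hy)
      · refine Or.inl ⟨hcA, ?_⟩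
        rintro (hx | hy)
        · exact hnX hx
        · obtain ⟨q, hq, rfl⟩ := hy
          exact (hmemL k q hq).choose_spec.choose_spec.2.2.2.1 hcA
      · refine Or.inr ⟨Or.inr hy, ?_⟩
        obtain ⟨q, hq, rfl⟩ := hy
        exact (hmemL k q hq).choose_spec.choose_spec.2.2.2.1
  refine ⟨?_, ?_, (Ms j).subset_indep (hind j) (Finset.erase_subset _ _)⟩
  · intro k hki hkj
    rw [hsymm k]
    refine (Ms k).tri _ (A k) (hind k) ?_ (hpairL k)
    intro p hp
    obtain ⟨r, h, h1, h2, hp1, hp2, hpI⟩ := hmemL k p hp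
    exact ⟨hp1, hp2, hpI⟩
  · rw [hsymm i]
    refine (Ms i).tri' _ (A i) (P.head hP) (hind i) hhead.1 hhead.2 ?_ (hpairL i)
    intro p hp
    obtain ⟨r, h, h1, h2, hp1, hp2, hpI⟩ := hmemL i p hp
    refine ⟨hp1, hp2, ?_, hpI, ?_⟩
    · rw [h2, List.head_eq_getElem]
      exact hnd (r+1) 0 h (by omega) (by omega)
    · rw [h2]
      exact path_noF Ms A i j P hP hchain hhead hlast hshort (r+1) h (by omega)
        (h2 ▸ hp2)
end

section
/- There exists a fair division instance with two agents whose valuations are matroid-rank functions and an allocation that is envy-free (hence EF1) but satisfies neither the MMS nor the PMMS guarantee. -/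
set_option maxRecDepth 100000 in
lemma dummy0 : True := trivial
-- helpers
lemma frank_le {E : Type*} [Fintype E] [DecidableEq E] (M : FinMatroid E) (S : Finset E)
    (n : ℕ) (h : ∀ I ⊆ S, M.Indep I → I.card ≤ n) : M.rank S ≤ n := by
  refine csSup_le ?_ ?_
  · exact ⟨0, ∅, by simp, M.empty_indep, rfl⟩
  · rintro t ⟨I, hIS, hInd, rfl⟩; exact h I hIS hInd

lemma frank_ge {E : Type*} [Fintype E] [DecidableEq E] (M : FinMatroid E) (S I : Finset E)
    (hIS : I ⊆ S) (h : M.Indep I) : I.card ≤ M.rank S := by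
  refine le_csSup ?_ ?_
  · exact ⟨S.card, by rintro t ⟨J, hJ, _, rfl⟩; exact Finset.card_le_card hJ⟩
  · exact ⟨I, hIS, h, rfl⟩

lemma fexists_rank {E : Type*} [Fintype E] [DecidableEq E] (M : FinMatroid E) (S : Finset E) :
    ∃ I, I ⊆ S ∧ M.Indep I ∧ I.card = M.rank S := by
  have h := Nat.sSup_mem (s := {t | ∃ I : Finset E, I ⊆ S ∧ M.Indep I ∧ I.card = t})
    ⟨0, ∅, by simp, M.empty_indep, rfl⟩
    ⟨S.card, by rintro t ⟨J, hJ, _, rfl⟩; exact Finset.card_le_card hJ⟩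
  obtain ⟨I, hIS, hInd, hc⟩ := h
  exact ⟨I, hIS, hInd, hc⟩

set_option maxRecDepth 100000 in
lemma sub1 : ∀ ⦃I J : Finset (Fin 6)⦄,
    ((I ∩ {0,1}).card ≤ 1 ∧ (I ∩ {2,3}).card ≤ 1) → J ⊆ I →
    ((J ∩ {0,1}).card ≤ 1 ∧ (J ∩ {2,3}).card ≤ 1) := by decide

set_option maxRecDepth 100000 in
set_option maxHeartbeats 1000000 in
lemma aug1 : ∀ ⦃I J : Finset (Fin 6)⦄,
    ((I ∩ {0,1}).card ≤ 1 ∧ (I ∩ {2,3}).card ≤ 1) →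
    ((J ∩ {0,1}).card ≤ 1 ∧ (J ∩ {2,3}).card ≤ 1) → I.card < J.card →
    ∃ g ∈ J \ I, (((insert g I) ∩ {0,1}).card ≤ 1 ∧ ((insert g I) ∩ {2,3}).card ≤ 1) := by
  decide

set_option maxRecDepth 100000 in
lemma fact4 : ∀ I : Finset (Fin 6),
    ((I ∩ {0,1}).card ≤ 1 ∧ (I ∩ {2,3}).card ≤ 1) → 4 ≤ I.card → (4 : Fin 6) ∈ I ∧ (5 : Fin 6) ∈ I := by
  decide

set_option maxRecDepth 100000 in
lemma le2 : ∀ I : Finset (Fin 6), I ⊆ {0,1,2,3} →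
    ((I ∩ {0,1}).card ≤ 1 ∧ (I ∩ {2,3}).card ≤ 1) → I.card ≤ 2 := by decide

noncomputable def M1' : FinMatroid (Fin 6) where
  Indep X := (X ∩ {0,1}).card ≤ 1 ∧ (X ∩ {2,3}).card ≤ 1
  empty_indep := by simp
  subset_indep := sub1
  aug := aug1

noncomputable def M2' : FinMatroid (Fin 6) where
  Indep _ := True
  empty_indep := trivial
  subset_indep := fun _ _ _ _ => trivial
  aug := by
    intro I J _ _ h
    have hns : ¬ J ⊆ I := fun hs => absurd (Finset.card_le_card hs) (by omega)
    obtain ⟨g, hgJ, hgI⟩ := Finset.not_subset.mp hns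
    exact ⟨g, Finset.mem_sdiff.mpr ⟨hgJ, hgI⟩, trivial⟩

/-- There is a two-agent instance with matroid-rank valuations and an envy-free (hence
EF1) allocation that is neither MMS nor PMMS: agent 1 has the partition matroid with
parts `{0,1}` and `{2,3}` (capacity 1 each, goods 4 and 5 free), agent 2 the free
matroid, and the allocation is `A₁ = {4,5}`, `A₂ = {0,1,2,3}`. -/
theorem stmt18 : ∃ M1 M2 : FinMatroid (Fin 6),
    (∀ X : Finset (Fin 6),
      M1.Indep X ↔ (X ∩ {0, 1}).card ≤ 1 ∧ (X ∩ {2, 3}).card ≤ 1) ∧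
    (∀ X : Finset (Fin 6), M2.Indep X) ∧
    M1.rank ({0, 1, 2, 3} : Finset (Fin 6)) ≤ M1.rank ({4, 5} : Finset (Fin 6)) ∧
    M2.rank ({4, 5} : Finset (Fin 6)) ≤ M2.rank ({0, 1, 2, 3} : Finset (Fin 6)) ∧
    M1.rank ({4, 5} : Finset (Fin 6)) = 2 ∧
    mmsN M1.rank 2 Finset.univ = 3 ∧
    M1.rank ({4, 5} : Finset (Fin 6)) < mmsN M1.rank 2 Finset.univ := by
  have hr2 : M1'.rank ({4,5} : Finset (Fin 6)) = 2 := by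
    refine le_antisymm (frank_le _ _ _ (fun I hI _ => ?_)) ?_
    · calc I.card ≤ ({4,5} : Finset (Fin 6)).card := Finset.card_le_card hI
        _ = 2 := by decide
    · have := frank_ge M1' {4,5} {4,5} (subset_refl _) ⟨by decide, by decide⟩
      simpa using this
  have hm3 : mmsN M1'.rank 2 Finset.univ = 3 := by
    refine le_antisymm ?_ ?_
    · apply csSup_le
      · exact ⟨0, ![Finset.univ, ∅], by decide, by decide, fun j => Nat.zero_le _⟩
      · rintro t ⟨Y, hdisj, hcov, hle⟩
        by_contra h
        push_neg at h
        have h4 : ∀ j : Fin 2, (4:Fin 6) ∈ Y j := by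
          intro j
          obtain ⟨I, hIS, hInd, hcard⟩ := fexists_rank M1' (Y j)
          have : 4 ≤ I.card := by have := hle j; omega
          exact hIS (fact4 I hInd this).1
        have := hdisj 0 1 (by decide)
        exact (Finset.disjoint_left.mp this (h4 0)) (h4 1)
    · apply le_csSup
      · refine ⟨6, ?_⟩
        rintro t ⟨Y, hdisj, hcov, hle⟩
        calc t ≤ M1'.rank (Y 0) := hle 0
          _ ≤ (Y 0).card := frank_le _ _ _ (fun I hI _ => Finset.card_le_card hI)
          _ ≤ 6 := by simpa using Finset.card_le_card (Finset.subset_univ (Y 0))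
      · refine ⟨![{0,2,4}, {1,3,5}], by decide, by decide, ?_⟩
        intro j
        fin_cases j
        · have := frank_ge M1' {0,2,4} {0,2,4} (subset_refl _) ⟨by decide, by decide⟩
          simpa using this
        · have := frank_ge M1' {1,3,5} {1,3,5} (subset_refl _) ⟨by decide, by decide⟩
          simpa using this
  refine ⟨M1', M2', fun X => Iff.rfl, fun X => trivial, ?_, ?_, hr2, hm3, by omega⟩
  · -- rank {0,1,2,3} ≤ rank {4,5}
    have h1 : M1'.rank {0,1,2,3} ≤ 2 := frank_le _ _ _ (fun I hI hInd => le2 I hI hInd)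
    omega
  · -- M2 ranks
    have h1 : M2'.rank {4,5} ≤ 2 := frank_le _ _ _ (fun I hI _ => by
      calc I.card ≤ ({4,5} : Finset (Fin 6)).card := Finset.card_le_card hI
        _ = 2 := by decide)
    have h2 : (4:ℕ) ≤ M2'.rank {0,1,2,3} := by
      have := frank_ge M2' {0,1,2,3} {0,1,2,3} (subset_refl _) trivial
      simpa using this
    omega
end
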